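/- arXiv:math/0307125 — 7 statements merged into one kernel-verified Lean document; each statement's English description precedes it below -/
import Mathlib

section
/- For any integers a < b and any polynomial f, the weighted sum (1/2)f(a) + f(a+1) + ... + f(b-1) + (1/2)f(b) equals the result of applying the operators L(∂/∂h₁)L(∂/∂h₂) to ∫_{a-h₁}^{b+h₂} f(x) dx and evaluating at h₁ = h₂ = 0, where L(S) = (S/2)/tanh(S/2) = 1 + Σ_{k≥1} b_{2k} S^{2k}/(2k)! with b_{2k} the Bernoulli numbers (the operator application reduces to a finite sum since the integral is a polynomial in h₁, h₂). -/
open scoped BigOperators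
open intervalIntegral
open Polynomial

/-- The Taylor coefficients of `L(S) = (S/2)/tanh(S/2)
    = 1 + ∑_{k≥1} b_{2k} S^{2k}/(2k)!`. -/
noncomputable def Lcoeff (j : ℕ) : ℝ :=
  if j = 0 then 1 else if Odd j then 0 else ((bernoulli j : ℚ) : ℝ) / (Nat.factorial j)

noncomputable def pint (f : ℝ[X]) : ℝ[X] := f.sum fun n c => C (c / (n+1)) * X^(n+1)

lemma derivative_pint (f : ℝ[X]) : derivative (pint f) = f := by
  conv_rhs => rw [← f.sum_C_mul_X_pow_eq]
  rw [pint, Polynomial.sum, Polynomial.sum, map_sum]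
  refine Finset.sum_congr rfl fun n _ => ?_
  rw [derivative_C_mul, derivative_X_pow]
  rw [← mul_assoc, ← C_mul, Nat.add_sub_cancel]
  congr 1
  push_cast
  field_simp

lemma natDegree_pint (f : ℝ[X]) : (pint f).natDegree ≤ f.natDegree + 1 := by
  refine Polynomial.natDegree_sum_le_of_forall_le _ _ fun n hn => ?_
  refine (natDegree_C_mul_le _ _).trans ?_
  rw [natDegree_X_pow]
  exact Nat.add_le_add_right (Polynomial.le_natDegree_of_mem_supp n hn) 1

lemma integral_eval (f : ℝ[X]) (u v : ℝ) :
    ∫ x in u..v, f.eval x = (pint f).eval v - (pint f).eval u := by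
  apply intervalIntegral.integral_eq_sub_of_hasDerivAt
  · intro x _
    simpa [derivative_pint] using (pint f).hasDerivAt x
  · exact (f.continuous_aeval).intervalIntegrable _ _

lemma iteratedDeriv_eval_shift (P : ℝ[X]) (c s : ℝ) (n : ℕ) :
    iteratedDeriv n (fun h : ℝ => P.eval (c + s * h))
      = fun h => s^n * (derivative^[n] P).eval (c + s * h) := by
  induction n with
  | zero => simp [iteratedDeriv_zero]
  | succ n ih =>
    rw [iteratedDeriv_succ, ih]
    funext t
    have h2 : HasDerivAt (fun h : ℝ => c + s * h) s t := by
      simpa using ((hasDerivAt_id t).const_mul s).const_add c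
    have h1 : HasDerivAt (fun h : ℝ => (derivative^[n] P).eval (c + s * h))
        ((derivative (derivative^[n] P)).eval (c + s * t) * s) t :=
      by have := (Polynomial.hasDerivAt (derivative^[n] P) (c + s * t)).comp t h2; exact this
    rw [deriv_const_mul _ h1.differentiableAt, h1.deriv, Function.iterate_succ_apply']
    ring

lemma key_mono (q : ℕ → ℚ) (w : ℕ → ℚ)
    (hq : ∀ p : ℕ, ∑ j ∈ Finset.range p, (p.choose j : ℚ) * q j = w p)
    (N p : ℕ) (hp : p ≤ N + 1) (r : ℝ) :
    ∑ j ∈ Finset.range (N+1), ((q j : ℝ) / j.factorial) *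
        ((derivative^[j] (monomial p r : ℝ[X])).eval 1
          - (derivative^[j] (monomial p r : ℝ[X])).eval 0)
      = r * (w p : ℝ) := by
  have hterm : ∀ j, (derivative^[j] (monomial p r : ℝ[X])).eval 1
      - (derivative^[j] (monomial p r : ℝ[X])).eval 0
      = r * (p.descFactorial j) * (1 - (0:ℝ)^(p-j)) := by
    intro j
    rw [← C_mul_X_pow_eq_monomial, iterate_derivative_C_mul,
      iterate_derivative_X_pow_eq_C_mul]
    simp [mul_sub]
    ring
  simp_rw [hterm]
  rw [← Finset.sum_subset (Finset.range_subset_range.mpr hp)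
    (by
      intro j _ hj
      rw [Finset.mem_range, not_lt] at hj
      have : p - j = 0 := Nat.sub_eq_zero_of_le hj
      simp [this])]
  have : ∀ j ∈ Finset.range p, ((q j : ℝ) / j.factorial) *
      (r * (p.descFactorial j) * (1 - (0:ℝ)^(p-j)))
      = r * ((p.choose j : ℚ) * q j : ℚ) := by
    intro j hj
    rw [Finset.mem_range] at hj
    rw [zero_pow (Nat.sub_ne_zero_of_lt hj), Nat.descFactorial_eq_factorial_mul_choose]
    push_cast
    have : (j.factorial : ℝ) ≠ 0 := by positivity
    field_simp
    ring
  rw [Finset.sum_congr rfl this, ← Finset.mul_sum, ← Rat.cast_sum, hq p]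

lemma key_poly (q : ℕ → ℚ) (w : ℕ → ℚ)
    (hq : ∀ p : ℕ, ∑ j ∈ Finset.range p, (p.choose j : ℚ) * q j = w p)
    (g : ℝ[X]) (N : ℕ) (hg : g.natDegree ≤ N + 1) :
    ∑ j ∈ Finset.range (N+1), ((q j : ℝ) / j.factorial) *
        ((derivative^[j] g).eval 1 - (derivative^[j] g).eval 0)
      = ∑ p ∈ Finset.range (N+2), g.coeff p * (w p : ℝ) := by
  have hrep : g = ∑ p ∈ Finset.range (N+2), monomial p (g.coeff p) :=
    g.as_sum_range' (N+2) (by omega)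
  conv_lhs => rw [hrep]
  simp_rw [iterate_derivative_sum, eval_finset_sum, ← Finset.sum_sub_distrib, Finset.mul_sum]
  rw [Finset.sum_comm]
  refine Finset.sum_congr rfl fun p hp => ?_
  rw [Finset.mem_range] at hp
  exact key_mono q w hq N p (by omega) _

lemma L1_zero (g : ℝ[X]) (N : ℕ) (hg : g.natDegree ≤ N + 1) :
    (derivative g).eval 0
      = ∑ j ∈ Finset.range (N+1), (((bernoulli j : ℚ) : ℝ) / j.factorial) *
          ((derivative^[j] g).eval 1 - (derivative^[j] g).eval 0) := by
  rw [key_poly bernoulli (fun p => if p = 1 then 1 else 0) (fun p => sum_bernoulli p) g N hg]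
  have : ∀ p ∈ Finset.range (N+2),
      g.coeff p * (((if p = 1 then (1:ℚ) else 0) : ℚ) : ℝ)
        = if p = 1 then g.coeff p else 0 := by
    intro p _
    split <;> simp
  rw [Finset.sum_congr rfl this, Finset.sum_ite_eq']
  simp [Finset.mem_range, ← Polynomial.coeff_zero_eq_eval_zero, Polynomial.coeff_derivative]

lemma L2_zero (g : ℝ[X]) (N : ℕ) (hg : g.natDegree ≤ N + 1) :
    (derivative g).eval 1
      = ∑ j ∈ Finset.range (N+1), (((bernoulli' j : ℚ) : ℝ) / j.factorial) *
          ((derivative^[j] g).eval 1 - (derivative^[j] g).eval 0) := by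
  rw [key_poly bernoulli' (fun p => (p : ℚ)) (fun p => sum_bernoulli' p) g N hg]
  have hrep : g = ∑ p ∈ Finset.range (N+2), monomial p (g.coeff p) :=
    g.as_sum_range' (N+2) (by omega)
  conv_lhs => rw [hrep]
  rw [map_sum, eval_finset_sum]
  refine Finset.sum_congr rfl fun p _ => ?_
  rw [derivative_monomial, eval_monomial]
  push_cast
  ring

lemma iterate_derivative_comp_shift (g : ℝ[X]) (c : ℝ) (j : ℕ) :
    derivative^[j] (g.comp (X + C c)) = (derivative^[j] g).comp (X + C c) := by
  induction j with
  | zero => simp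
  | succ j ih =>
    rw [Function.iterate_succ_apply', ih, derivative_comp]
    simp only [derivative_add, derivative_X, derivative_C, add_zero, one_mul]
    rw [← Function.iterate_succ_apply' derivative j g, Function.iterate_succ_apply]

lemma eval_comp_shift (g : ℝ[X]) (c x : ℝ) : (g.comp (X + C c)).eval x = g.eval (x + c) := by
  simp [eval_comp]

lemma L1gen (g : ℝ[X]) (N : ℕ) (hg : g.natDegree ≤ N + 1) (c : ℝ) :
    (derivative g).eval c
      = ∑ j ∈ Finset.range (N+1), (((bernoulli j : ℚ) : ℝ) / j.factorial) *
          ((derivative^[j] g).eval (c+1) - (derivative^[j] g).eval c) := by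
  have h1 : derivative (g.comp (X + C c)) = (derivative g).comp (X + C c) := by
    simpa using iterate_derivative_comp_shift g c 1
  have hdeg : (g.comp (X + C c)).natDegree ≤ N + 1 := by
    rw [natDegree_comp]
    simpa using hg
  have h := L1_zero (g.comp (X + C c)) N hdeg
  rw [h1, eval_comp_shift, zero_add] at h
  simp_rw [iterate_derivative_comp_shift, eval_comp_shift, zero_add] at h
  rw [h]
  exact Finset.sum_congr rfl fun j _ => by rw [add_comm (1:ℝ) c]

lemma L2gen (g : ℝ[X]) (N : ℕ) (hg : g.natDegree ≤ N + 1) (c : ℝ) :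
    (derivative g).eval (c+1)
      = ∑ j ∈ Finset.range (N+1), (((bernoulli' j : ℚ) : ℝ) / j.factorial) *
          ((derivative^[j] g).eval (c+1) - (derivative^[j] g).eval c) := by
  have h1 : derivative (g.comp (X + C c)) = (derivative g).comp (X + C c) := by
    simpa using iterate_derivative_comp_shift g c 1
  have hdeg : (g.comp (X + C c)).natDegree ≤ N + 1 := by
    rw [natDegree_comp]
    simpa using hg
  have h := L2_zero (g.comp (X + C c)) N hdeg
  rw [h1, eval_comp_shift, add_comm (1:ℝ) c] at h
  simp_rw [iterate_derivative_comp_shift, eval_comp_shift, zero_add] at h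
  rw [h]
  exact Finset.sum_congr rfl fun j _ => by rw [add_comm (1:ℝ) c]

lemma Lcoeff_eq (j : ℕ) :
    Lcoeff j = (((bernoulli j : ℚ) : ℝ) / j.factorial
      + ((bernoulli' j : ℚ) : ℝ) / j.factorial) / 2 := by
  rcases eq_or_ne j 0 with h | h
  · simp [Lcoeff, h]
  rcases eq_or_ne j 1 with h1 | h1
  · norm_num [Lcoeff, h1, _root_.bernoulli_one, bernoulli'_one]
  by_cases hodd : Odd j
  · have hb' : bernoulli' j = 0 := bernoulli'_eq_zero_of_odd hodd (by omega)
    have hb : _root_.bernoulli j = 0 := by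
      rw [bernoulli_eq_bernoulli'_of_ne_one h1, hb']
    simp [Lcoeff, h, hodd, hb, hb']
  · rw [bernoulli_eq_bernoulli'_of_ne_one h1]
    simp only [Lcoeff, h, hodd, if_false, bernoulli_eq_bernoulli'_of_ne_one h1]
    ring

lemma Lcoeff_mul_neg_one_pow (j : ℕ) : Lcoeff j * (-1:ℝ)^j = Lcoeff j := by
  by_cases hodd : Odd j
  · have h0 : j ≠ 0 := by rintro rfl; simp at hodd
    simp [Lcoeff, h0, hodd]
  · rw [Nat.not_odd_iff_even] at hodd
    rw [hodd.neg_one_pow, mul_one]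

lemma step (f : ℝ[X]) (m : ℕ) (hm : f.natDegree ≤ 2*m) (c : ℝ) :
    (f.eval c + f.eval (c+1))/2
      = (∑ j ∈ Finset.range (2*m+1), Lcoeff j * (derivative^[j] (pint f)).eval (c+1))
        - ∑ j ∈ Finset.range (2*m+1), Lcoeff j * (derivative^[j] (pint f)).eval c := by
  have hdeg : (pint f).natDegree ≤ 2*m + 1 := (natDegree_pint f).trans (by omega)
  have h1 := L1gen (pint f) (2*m) hdeg c
  have h2 := L2gen (pint f) (2*m) hdeg c
  rw [derivative_pint] at h1 h2
  rw [← Finset.sum_sub_distrib]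
  simp_rw [← mul_sub, Lcoeff_eq]
  have : ∀ j ∈ Finset.range (2*m+1),
      (((bernoulli j : ℚ) : ℝ) / j.factorial + ((bernoulli' j : ℚ) : ℝ) / j.factorial) / 2 *
        ((derivative^[j] (pint f)).eval (c+1) - (derivative^[j] (pint f)).eval c)
      = ((((bernoulli j : ℚ) : ℝ) / j.factorial) *
          ((derivative^[j] (pint f)).eval (c+1) - (derivative^[j] (pint f)).eval c)
        + (((bernoulli' j : ℚ) : ℝ) / j.factorial) *
          ((derivative^[j] (pint f)).eval (c+1) - (derivative^[j] (pint f)).eval c)) / 2 := by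
    intro j _
    ring
  rw [Finset.sum_congr rfl this, ← Finset.sum_div, Finset.sum_add_distrib, ← h1, ← h2]

lemma Icc_sum_eval (f : ℝ[X]) (m : ℕ) (hm : f.natDegree ≤ 2*m) (a : ℤ) :
    ∀ b : ℤ, a + 1 ≤ b →
    ∑ x ∈ Finset.Icc a b, f.eval (x:ℝ)
      = ((∑ j ∈ Finset.range (2*m+1), Lcoeff j * (derivative^[j] (pint f)).eval (b:ℝ))
          - ∑ j ∈ Finset.range (2*m+1), Lcoeff j * (derivative^[j] (pint f)).eval (a:ℝ))
        + (f.eval (a:ℝ) + f.eval (b:ℝ))/2 := by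
  refine Int.le_induction ?_ ?_
  · have hset : Finset.Icc a (a+1) = {a, a+1} := by
      ext x
      simp only [Finset.mem_Icc, Finset.mem_insert, Finset.mem_singleton]
      omega
    rw [hset, Finset.sum_pair (by omega)]
    have hs := step f m hm (a:ℝ)
    have hc : ((a + 1 : ℤ) : ℝ) = (a:ℝ) + 1 := by push_cast; ring
    rw [hc]
    linarith
  · intro b hb ih
    have hset : Finset.Icc a (b+1) = insert (b+1) (Finset.Icc a b) := by
      ext x
      simp only [Finset.mem_Icc, Finset.mem_insert]
      omega
    rw [hset, Finset.sum_insert (by simp), ih]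
    have hs := step f m hm (b:ℝ)
    have hc : ((b + 1 : ℤ) : ℝ) = (b:ℝ) + 1 := by push_cast; ring
    rw [hc]
    linarith

lemma Lcoeff_zero : Lcoeff 0 = 1 := by simp [Lcoeff]

/-- Exact Euler–Maclaurin formula for the weighted sum of a polynomial over the
integer points of `[a,b]`: applying `L(∂/∂h₁)L(∂/∂h₂)` (a finite sum, since the
integral is a polynomial in `h₁,h₂`; all terms of order `> 2m ≥ deg f` vanish)
to `∫_{a-h₁}^{b+h₂} f` and evaluating at `h₁ = h₂ = 0`. -/
theorem exact_euler_maclaurin_weighted_sum_polynomial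
    (a b : ℤ) (hab : a < b) (f : Polynomial ℝ) (m : ℕ) (hm : f.natDegree ≤ 2 * m) :
    (∑ x ∈ Finset.Icc a b, (if x = a ∨ x = b then (1/2 : ℝ) else 1) * f.eval (x : ℝ))
      = ∑ j ∈ Finset.range (2*m+1), ∑ l ∈ Finset.range (2*m+1),
          Lcoeff j * Lcoeff l *
            iteratedDeriv j
              (fun h₁ : ℝ => iteratedDeriv l
                (fun h₂ : ℝ => ∫ x in ((a : ℝ) - h₁)..((b : ℝ) + h₂), f.eval x) 0) 0 := by
  set F := pint f with hF
  set Fb := F.eval (b:ℝ) with hFb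
  -- inner iterated derivative
  have inner : ∀ (l : ℕ) (h₁ : ℝ),
      iteratedDeriv l (fun h₂ : ℝ => ∫ x in ((a:ℝ) - h₁)..((b:ℝ) + h₂), f.eval x) 0
        = (derivative^[l] F).eval (b:ℝ) - (if l = 0 then F.eval ((a:ℝ) - h₁) else 0) := by
    intro l h₁
    have hfun : (fun h₂ : ℝ => ∫ x in ((a:ℝ) - h₁)..((b:ℝ) + h₂), f.eval x)
        = fun h₂ => (F - C (F.eval ((a:ℝ) - h₁))).eval ((b:ℝ) + 1 * h₂) := by
      funext h₂
      rw [integral_eval]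
      simp [hF]
    rw [hfun, iteratedDeriv_eval_shift, iterate_derivative_sub]
    rcases eq_or_ne l 0 with rfl | hl
    · simp
    · rw [iterate_derivative_C (Nat.pos_of_ne_zero hl)]
      simp [hl]
  -- outer iterated derivative
  have outer : ∀ j l : ℕ,
      iteratedDeriv j (fun h₁ : ℝ => iteratedDeriv l
          (fun h₂ : ℝ => ∫ x in ((a:ℝ) - h₁)..((b:ℝ) + h₂), f.eval x) 0) 0
        = if l = 0 then (-1:ℝ)^j * (derivative^[j] (C Fb - F)).eval (a:ℝ)
          else (if j = 0 then (derivative^[l] F).eval (b:ℝ) else 0) := by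
    intro j l
    rcases eq_or_ne l 0 with rfl | hl
    · have hfun : (fun h₁ : ℝ => iteratedDeriv 0
          (fun h₂ : ℝ => ∫ x in ((a:ℝ) - h₁)..((b:ℝ) + h₂), f.eval x) 0)
          = fun h₁ => (C Fb - F).eval ((a:ℝ) + (-1) * h₁) := by
        funext h₁
        rw [inner 0 h₁, show (a:ℝ) + (-1) * h₁ = (a:ℝ) - h₁ from by ring]
        simp [hFb]
      rw [if_pos rfl, hfun, iteratedDeriv_eval_shift]
      simp
    · have hfun : (fun h₁ : ℝ => iteratedDeriv l
          (fun h₂ : ℝ => ∫ x in ((a:ℝ) - h₁)..((b:ℝ) + h₂), f.eval x) 0)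
          = fun h₁ => (C ((derivative^[l] F).eval (b:ℝ))).eval (0 + 0 * h₁) := by
        funext h₁
        rw [inner l h₁]
        simp [hl]
      rw [if_neg hl, hfun, iteratedDeriv_eval_shift]
      rcases eq_or_ne j 0 with rfl | hj
      · simp
      · simp [hj, zero_pow hj]
  -- rewrite the double sum
  rw [Finset.sum_congr rfl fun j _ => Finset.sum_congr rfl fun l _ => by rw [outer j l]]
  -- term-by-term decomposition
  have hA : ∀ j : ℕ, (derivative^[j] (C Fb - F)).eval (a:ℝ)
      = (if j = 0 then Fb else 0) - (derivative^[j] F).eval (a:ℝ) := by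
    intro j
    rw [iterate_derivative_sub]
    rcases eq_or_ne j 0 with rfl | hj
    · simp
    · rw [iterate_derivative_C (Nat.pos_of_ne_zero hj)]
      simp [hj]
  have h0mem : (0:ℕ) ∈ Finset.range (2*m+1) := by simp
  have hT : ∀ j l : ℕ,
      Lcoeff j * Lcoeff l *
        (if l = 0 then (-1:ℝ)^j * (derivative^[j] (C Fb - F)).eval (a:ℝ)
          else (if j = 0 then (derivative^[l] F).eval (b:ℝ) else 0))
      = (if l = 0 then
            (if j = 0 then Lcoeff j * Fb else 0) - Lcoeff j * (derivative^[j] F).eval (a:ℝ)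
          else 0)
        + (if j = 0 then
            (Lcoeff l * (derivative^[l] F).eval (b:ℝ)
              - (if l = 0 then Lcoeff l * (derivative^[l] F).eval (b:ℝ) else 0))
          else 0) := by
    intro j l
    rcases eq_or_ne l 0 with rfl | hl
    · rcases eq_or_ne j 0 with rfl | hj
      · simp only [eq_self_iff_true, if_true, hA, Lcoeff_zero]
        ring
      · simp only [eq_self_iff_true, if_true, if_neg hj, hA, Lcoeff_zero]
        have h := Lcoeff_mul_neg_one_pow j
        linear_combination (0 - (derivative^[j] F).eval (a:ℝ)) * h
    · rcases eq_or_ne j 0 with rfl | hj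
      · simp only [if_neg hl, eq_self_iff_true, if_true, Lcoeff_zero]
        ring
      · simp only [if_neg hl, if_neg hj]
        ring
  rw [Finset.sum_congr rfl fun j _ => Finset.sum_congr rfl fun l _ => hT j l]
  simp_rw [Finset.sum_add_distrib]
  have e1 : (∑ j ∈ Finset.range (2*m+1), ∑ l ∈ Finset.range (2*m+1),
      (if l = 0 then (if j = 0 then Lcoeff j * Fb else 0)
          - Lcoeff j * (derivative^[j] F).eval (a:ℝ) else 0))
      = Fb - ∑ j ∈ Finset.range (2*m+1), Lcoeff j * (derivative^[j] F).eval (a:ℝ) := by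
    have h1 : ∀ j : ℕ, (∑ l ∈ Finset.range (2*m+1),
        (if l = 0 then (if j = 0 then Lcoeff j * Fb else 0)
            - Lcoeff j * (derivative^[j] F).eval (a:ℝ) else 0))
        = (if j = 0 then Lcoeff j * Fb else 0)
            - Lcoeff j * (derivative^[j] F).eval (a:ℝ) := fun j => by
      rw [Finset.sum_ite_eq' (Finset.range (2*m+1)) 0
        (fun _ => (if j = 0 then Lcoeff j * Fb else 0)
            - Lcoeff j * (derivative^[j] F).eval (a:ℝ)), if_pos h0mem]
    rw [Finset.sum_congr rfl fun j _ => h1 j, Finset.sum_sub_distrib,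
      Finset.sum_ite_eq' (Finset.range (2*m+1)) 0 (fun j => Lcoeff j * Fb), if_pos h0mem,
      Lcoeff_zero, one_mul]
  have e2 : (∑ j ∈ Finset.range (2*m+1), ∑ l ∈ Finset.range (2*m+1),
      (if j = 0 then
          (Lcoeff l * (derivative^[l] F).eval (b:ℝ)
            - (if l = 0 then Lcoeff l * (derivative^[l] F).eval (b:ℝ) else 0))
        else 0))
      = (∑ l ∈ Finset.range (2*m+1), Lcoeff l * (derivative^[l] F).eval (b:ℝ)) - Fb := by
    have h2 : ∀ j : ℕ, (∑ l ∈ Finset.range (2*m+1),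
        (if j = 0 then
          (Lcoeff l * (derivative^[l] F).eval (b:ℝ)
            - (if l = 0 then Lcoeff l * (derivative^[l] F).eval (b:ℝ) else 0))
        else 0))
        = if j = 0 then
            (∑ l ∈ Finset.range (2*m+1), Lcoeff l * (derivative^[l] F).eval (b:ℝ)) - Fb
          else 0 := by
      intro j
      rcases eq_or_ne j 0 with rfl | hj
      · simp only [eq_self_iff_true, if_true]
        rw [Finset.sum_sub_distrib,
          Finset.sum_ite_eq' (Finset.range (2*m+1)) 0
            (fun l => Lcoeff l * (derivative^[l] F).eval (b:ℝ)), if_pos h0mem,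
          Lcoeff_zero, one_mul, Function.iterate_zero_apply, ← hFb]
      · simp [hj]
    rw [Finset.sum_congr rfl fun j _ => h2 j,
      Finset.sum_ite_eq' (Finset.range (2*m+1)) 0
        (fun _ => (∑ l ∈ Finset.range (2*m+1),
          Lcoeff l * (derivative^[l] F).eval (b:ℝ)) - Fb), if_pos h0mem]
  rw [e1, e2]
  -- the analytic side
  have hI := Icc_sum_eval f m hm a b (by omega)
  rw [← hF] at hI
  have hmem_a : a ∈ Finset.Icc a b := Finset.mem_Icc.mpr ⟨le_refl a, le_of_lt hab⟩
  have hmem_b : b ∈ Finset.Icc a b := Finset.mem_Icc.mpr ⟨le_of_lt hab, le_refl b⟩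
  have hw : (∑ x ∈ Finset.Icc a b, (if x = a ∨ x = b then (1/2 : ℝ) else 1) * f.eval (x : ℝ))
      = (∑ x ∈ Finset.Icc a b, f.eval (x:ℝ))
        - (f.eval (a:ℝ)/2 + f.eval (b:ℝ)/2) := by
    have hterm : ∀ x ∈ Finset.Icc a b,
        (if x = a ∨ x = b then (1/2 : ℝ) else 1) * f.eval (x : ℝ)
        = f.eval (x:ℝ) - ((if x = a then f.eval (x:ℝ)/2 else 0)
            + (if x = b then f.eval (x:ℝ)/2 else 0)) := by
      intro x _
      rcases eq_or_ne x a with rfl | hxa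
      · rw [if_pos (Or.inl rfl), if_pos rfl, if_neg (by omega)]
        ring
      rcases eq_or_ne x b with rfl | hxb
      · rw [if_pos (Or.inr rfl), if_neg hxa, if_pos rfl]
        ring
      · rw [if_neg (by tauto), if_neg hxa, if_neg hxb]
        ring
    rw [Finset.sum_congr rfl hterm, Finset.sum_sub_distrib, Finset.sum_add_distrib,
      Finset.sum_ite_eq' (Finset.Icc a b) a (fun x => f.eval (x:ℝ)/2), if_pos hmem_a,
      Finset.sum_ite_eq' (Finset.Icc a b) b (fun x => f.eval (x:ℝ)/2), if_pos hmem_b]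
  rw [hw, hI]
  ring
end

section
/- Let m ≥ 1 be an integer, k = ⌊m/2⌋, and let f be a C^m function on [a,b] with a < b integers. Then Σ'_{[a,b]} f = ∫_a^b f(x)dx + Σ_{j=1}^{k} P_{2j}(0)·(f^{(2j-1)}(b) - f^{(2j-1)}(a)) + (-1)^{m-1} ∫_a^b P_m(x) f^{(m)}(x) dx, where P_m(x) = B_m({x})/m!. -/
open scoped BigOperators
open MeasureTheory

/-- `P_m(x) = B_m({x})/m!`, the periodized Bernoulli polynomial. -/
noncomputable def bernP (m : ℕ) (x : ℝ) : ℝ :=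
  (Polynomial.aeval (Int.fract x) (Polynomial.bernoulli m)) / (Nat.factorial m)

/-- polynomial version -/
noncomputable def bernQ (m : ℕ) (x : ℝ) : ℝ :=
  (Polynomial.aeval x (Polynomial.bernoulli m)) / (Nat.factorial m)

lemma bernP_eq (m : ℕ) (x : ℝ) : bernP m x = bernQ m (Int.fract x) := rfl

lemma bernQ_hasDerivAt (m : ℕ) (c x : ℝ) :
    HasDerivAt (fun y => bernQ (m+1) (y - c)) (bernQ m (x - c)) x := by
  have hp : ∀ k : ℕ, ∀ y : ℝ, bernQ k y
      = ((Polynomial.bernoulli k).map (algebraMap ℚ ℝ)).eval y / (Nat.factorial k) := by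
    intro k y
    rw [bernQ, Polynomial.aeval_def, Polynomial.eval₂_eq_eval_map]
  have h1 : HasDerivAt (fun y : ℝ => ((Polynomial.bernoulli (m+1)).map (algebraMap ℚ ℝ)).eval (y - c))
      ((Polynomial.derivative ((Polynomial.bernoulli (m+1)).map (algebraMap ℚ ℝ))).eval (x - c)) x := by
    have := (Polynomial.hasDerivAt ((Polynomial.bernoulli (m+1)).map (algebraMap ℚ ℝ)) (x - c)).comp x
      ((hasDerivAt_id x).sub_const c)
    simp only [mul_one] at this
    exact this
  have h2 : (Polynomial.derivative ((Polynomial.bernoulli (m+1)).map (algebraMap ℚ ℝ))).eval (x - c)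
      = (m+1 : ℝ) * ((Polynomial.bernoulli m).map (algebraMap ℚ ℝ)).eval (x - c) := by
    rw [Polynomial.derivative_map, Polynomial.derivative_bernoulli_add_one]
    push_cast
    simp [Polynomial.eval_mul]
  simp only [hp]
  have := h1.div_const ((m+1).factorial : ℝ)
  refine this.congr_deriv ?_
  rw [h2, Nat.factorial_succ]
  push_cast
  field_simp

lemma bernQ_aeval_rat (m : ℕ) (q : ℚ) :
    (Polynomial.aeval ((q : ℝ)) (Polynomial.bernoulli m)) = (((Polynomial.bernoulli m).eval q : ℚ) : ℝ) := by
  rw [show ((q:ℝ)) = algebraMap ℚ ℝ q from rfl, Polynomial.aeval_algebraMap_apply]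
  simp

lemma bernQ_zero (m : ℕ) : bernQ m 0 = ((bernoulli m : ℚ) : ℝ) / (Nat.factorial m) := by
  rw [bernQ, show (0:ℝ) = ((0:ℚ):ℝ) by norm_num, bernQ_aeval_rat]
  simp

lemma bernQ_one (m : ℕ) (hm : m ≠ 1) : bernQ m 1 = bernQ m 0 := by
  rw [bernQ, bernQ_zero, show (1:ℝ) = ((1:ℚ):ℝ) by norm_num, bernQ_aeval_rat]
  rw [Polynomial.bernoulli_eval_one, bernoulli_eq_bernoulli'_of_ne_one hm]

lemma bernP_zero_eq (m : ℕ) : bernP m 0 = bernQ m 0 := by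
  rw [bernP_eq]; norm_num

lemma bernP_odd_zero (m : ℕ) (h : Odd m) (hm : 1 < m) : bernP m 0 = 0 := by
  rw [bernP_zero_eq, bernQ_zero, bernoulli_eq_bernoulli'_of_ne_one (by omega),
    bernoulli'_eq_zero_of_odd h hm]
  simp

lemma bernQ_continuous (m : ℕ) : Continuous (bernQ m) := by
  unfold bernQ
  apply Continuous.div_const
  have : (fun x : ℝ => (Polynomial.aeval x (Polynomial.bernoulli m)))
      = fun x : ℝ => ((Polynomial.bernoulli m).map (algebraMap ℚ ℝ)).eval x := by
    funext x; rw [Polynomial.aeval_def, Polynomial.eval₂_eq_eval_map]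
  rw [this]
  exact Polynomial.continuous _

lemma bernP_measurable (m : ℕ) : Measurable (bernP m) := by
  have : bernP m = fun x => bernQ m (Int.fract x) := rfl
  rw [this]
  exact (bernQ_continuous m).measurable.comp measurable_fract

lemma bernP_intervalIntegrable (m : ℕ) (a b : ℝ) :
    IntervalIntegrable (bernP m) volume a b := by
  obtain ⟨C, hC⟩ := (isCompact_Icc (a := (0:ℝ)) (b := 1)).exists_bound_of_continuousOn
    (bernQ_continuous m).continuousOn
  rw [intervalIntegrable_iff]
  have hconst : MeasureTheory.IntegrableOn (fun _ : ℝ => C) (Set.uIoc a b) volume :=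
    (MeasureTheory.integrableOn_const_iff).mpr (Or.inr measure_Ioc_lt_top)
  apply MeasureTheory.Integrable.mono' hconst
    ((bernP_measurable m).aestronglyMeasurable.restrict)
  filter_upwards with x
  rw [bernP_eq]
  exact hC _ ⟨Int.fract_nonneg x, le_of_lt (Int.fract_lt_one x)⟩

lemma bernP_mul_intervalIntegrable (m : ℕ) (a b : ℝ) {g : ℝ → ℝ}
    (hg : ContinuousOn g (Set.uIcc a b)) :
    IntervalIntegrable (fun x => bernP m x * g x) volume a b :=
  (bernP_intervalIntegrable m a b).mul_continuousOn hg

lemma integral_bernP_congr (m : ℕ) (n : ℤ) (g : ℝ → ℝ) :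
    (∫ x in (n:ℝ)..((n:ℝ)+1), bernP m x * g x)
      = ∫ x in (n:ℝ)..((n:ℝ)+1), bernQ m (x - n) * g x := by
  apply intervalIntegral.integral_congr_ae
  have hnull : (volume : Measure ℝ) {((n:ℝ)+1)} = 0 := measure_singleton _
  rw [MeasureTheory.ae_iff]
  apply measure_mono_null _ hnull
  intro x hx
  rw [Set.mem_setOf_eq, Classical.not_imp] at hx
  obtain ⟨hmem, hne⟩ := hx
  by_contra hxx
  apply hne
  have hx1 : x ∈ Set.Ioc (n:ℝ) ((n:ℝ)+1) := by
    rwa [Set.uIoc_of_le (by linarith)] at hmem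
  have hfr : Int.fract x = x - n := by
    rw [Int.fract_eq_iff]
    refine ⟨by linarith [hx1.1], ?_, ⟨n, by ring⟩⟩
    have hxne : x ≠ (n:ℝ)+1 := fun h => hxx (by simp [h])
    have := hx1.2
    have : x < (n:ℝ)+1 := lt_of_le_of_ne this hxne
    linarith
  rw [bernP_eq, hfr]

lemma bernP_parts (m : ℕ) (n : ℤ) (F F' : ℝ → ℝ)
    (hF : ∀ x ∈ Set.Icc (n:ℝ) ((n:ℝ)+1), HasDerivAt F (F' x) x)
    (hF' : ContinuousOn F' (Set.Icc (n:ℝ) ((n:ℝ)+1))) :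
    (∫ x in (n:ℝ)..((n:ℝ)+1), bernP m x * F x)
      = bernQ (m+1) 1 * F ((n:ℝ)+1) - bernQ (m+1) 0 * F (n:ℝ)
        - ∫ x in (n:ℝ)..((n:ℝ)+1), bernP (m+1) x * F' x := by
  have huIcc : Set.uIcc (n:ℝ) ((n:ℝ)+1) = Set.Icc (n:ℝ) ((n:ℝ)+1) :=
    Set.uIcc_of_le (by linarith)
  rw [integral_bernP_congr, integral_bernP_congr]
  have hparts := intervalIntegral.integral_mul_deriv_eq_deriv_mul
    (u := fun x => bernQ (m+1) (x - n)) (u' := fun x => bernQ m (x - n))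
    (v := F) (v' := F') (a := (n:ℝ)) (b := (n:ℝ)+1)
    (fun x _ => bernQ_hasDerivAt m n x)
    (fun x hx => hF x (huIcc ▸ hx))
    (((bernQ_continuous m).comp (continuous_id.sub continuous_const)).continuousOn.intervalIntegrable)
    (hF'.mono (le_of_eq huIcc)).intervalIntegrable
  simp only [show ((n:ℝ)+1) - (n:ℝ) = 1 by ring, show ((n:ℝ)) - (n:ℝ) = 0 by ring] at hparts
  have hc : (∫ x in (n:ℝ)..((n:ℝ)+1), bernQ (m+1) (x - n) * F' x)
      = ∫ x in (n:ℝ)..((n:ℝ)+1), F' x * bernQ (m+1) (x - n) := by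
    apply intervalIntegral.integral_congr; intro x _; ring
  rw [hc]
  linarith [hparts]

lemma bernP_zero_fun (x : ℝ) : bernP 0 x = 1 := by
  simp [bernP]

lemma bernQ_one_one : bernQ 1 1 = 1/2 := by
  rw [bernQ, show (1:ℝ) = ((1:ℚ):ℝ) by norm_num, bernQ_aeval_rat, Polynomial.bernoulli_eval_one]
  norm_num [bernoulli'_one]

lemma bernQ_one_zero : bernQ 1 0 = -(1/2) := by
  rw [bernQ_zero, bernoulli_one]
  norm_num

lemma neg_pow_pred (m : ℕ) (hm : 1 ≤ m) : ((-1:ℝ))^(m-1) = -((-1:ℝ))^m := by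
  have : m = (m-1) + 1 := by omega
  rw [this, pow_succ]
  simp

lemma euler_maclaurin_unit (m : ℕ) (hm : 1 ≤ m) (n : ℤ) (f : ℕ → ℝ → ℝ)
    (hderiv : ∀ j < m, ∀ x ∈ Set.Icc (n:ℝ) ((n:ℝ)+1), HasDerivAt (f j) (f (j+1) x) x)
    (hcont : ContinuousOn (f m) (Set.Icc (n:ℝ) ((n:ℝ)+1))) :
    (f 0 (n:ℝ) + f 0 ((n:ℝ)+1))/2
      = (∫ x in (n:ℝ)..((n:ℝ)+1), f 0 x)
        + (∑ j ∈ Finset.Icc 1 (m/2),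
            bernP (2*j) 0 * (f (2*j - 1) ((n:ℝ)+1) - f (2*j - 1) (n:ℝ)))
        + (-1:ℝ)^(m-1) * ∫ x in (n:ℝ)..((n:ℝ)+1), bernP m x * f m x := by
  induction m, hm using Nat.le_induction with
  | base =>
    have hparts := bernP_parts 0 n (f 0) (f 1) (hderiv 0 (by omega)) hcont
    have h0 : (∫ x in (n:ℝ)..((n:ℝ)+1), bernP 0 x * f 0 x)
        = ∫ x in (n:ℝ)..((n:ℝ)+1), f 0 x := by
      apply intervalIntegral.integral_congr; intro x _; simp [bernP_zero_fun]
    rw [h0, bernQ_one_one, bernQ_one_zero] at hparts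
    norm_num
    linarith [hparts]
  | succ m hm1 ih =>
    have hcm : ContinuousOn (f m) (Set.Icc (n:ℝ) ((n:ℝ)+1)) := fun x hx =>
      ((hderiv m (by omega) x hx).continuousAt).continuousWithinAt
    have IH := ih (fun j hj => hderiv j (by omega)) hcm
    have hparts := bernP_parts m n (f m) (f (m+1)) (hderiv m (by omega)) hcont
    rw [bernQ_one (m+1) (by omega), ← bernP_zero_eq] at hparts
    rcases Nat.even_or_odd m with he | ho
    · -- m even, m+1 odd ≥ 3
      obtain ⟨k, hk⟩ := he
      have hz : bernP (m+1) 0 = 0 := bernP_odd_zero (m+1) (by exact ⟨k, by omega⟩) (by omega)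
      have hdiv : (m+1)/2 = m/2 := by omega
      rw [hdiv, show m+1-1 = m from rfl]
      rw [hz] at hparts
      rw [neg_pow_pred m hm1] at IH
      rw [IH, hparts]
      ring
    · -- m odd, m+1 even
      obtain ⟨k, hk⟩ := ho
      have hdiv : (m+1)/2 = m/2 + 1 := by omega
      rw [hdiv, Finset.sum_Icc_succ_top (by omega)]
      have h2j : 2 * (m/2+1) = m+1 := by omega
      rw [h2j, show m+1-1 = m from rfl]
      have hsgn : ((-1:ℝ))^(m-1) = 1 := Even.neg_one_pow (by exact ⟨k, by omega⟩)
      have hsgn2 : ((-1:ℝ))^m = -1 := Odd.neg_one_pow ⟨k, hk⟩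
      rw [hsgn] at IH
      rw [hsgn2]
      rw [IH, hparts]
      ring

lemma Icc_int_succ (a b : ℤ) (h : a ≤ b + 1) :
    Finset.Icc a (b+1) = insert (b+1) (Finset.Icc a b) := by
  ext x; simp [Finset.mem_Icc]; omega

lemma sum_Icc_int_succ (a b : ℤ) (h : a ≤ b + 1) (f : ℤ → ℝ) :
    (∑ k ∈ Finset.Icc a (b+1), f k) = (∑ k ∈ Finset.Icc a b, f k) + f (b+1) := by
  rw [Icc_int_succ a b h, Finset.sum_insert (by simp [Finset.mem_Icc])]
  ring

lemma trapez_step (a b : ℤ) (hab : a < b) (g : ℤ → ℝ) :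
    (∑ x ∈ Finset.Icc a (b+1), (if x = a ∨ x = b+1 then (1/2:ℝ) else 1) * g x)
      = (∑ x ∈ Finset.Icc a b, (if x = a ∨ x = b then (1/2:ℝ) else 1) * g x)
        + (g b + g (b+1))/2 := by
  have hsplit : ∀ w : ℤ → ℝ, (∑ x ∈ Finset.Icc a b, w x * g x)
      = (∑ x ∈ Finset.Icc a (b-1), w x * g x) + w b * g b := by
    intro w
    have := sum_Icc_int_succ a (b-1) (by omega) (fun x => w x * g x)
    rw [show b-1+1 = b by ring] at this
    exact this
  rw [sum_Icc_int_succ a b (by omega),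
    hsplit (fun x => if x = a ∨ x = b+1 then (1/2:ℝ) else 1),
    hsplit (fun x => if x = a ∨ x = b then (1/2:ℝ) else 1)]
  have hcong : (∑ x ∈ Finset.Icc a (b-1), (if x = a ∨ x = b+1 then (1/2:ℝ) else 1) * g x)
      = ∑ x ∈ Finset.Icc a (b-1), (if x = a ∨ x = b then (1/2:ℝ) else 1) * g x := by
    apply Finset.sum_congr rfl
    intro x hx
    rw [Finset.mem_Icc] at hx
    have h1 : (x = a ∨ x = b+1) ↔ (x = a ∨ x = b) := by omega
    simp only [h1]
  simp only [] at hcong ⊢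
  rw [hcong]
  have e2 : (if b = a ∨ b = b+1 then (1/2:ℝ) else 1) = 1 := by
    rw [if_neg]; omega
  rw [e2]
  simp only [or_true, if_true]
  ring


/-- Euler–Maclaurin with remainder on an interval: for integers `a < b`, `m ≥ 1`,
`k = ⌊m/2⌋`, and `f` of class `C^m` on `[a,b]` (given via its tower of derivatives
`f 0, f 1, …, f m`),
`Σ'_{[a,b]} f = ∫_a^b f + Σ_{j=1}^k P_{2j}(0)(f^{(2j-1)}(b) - f^{(2j-1)}(a))
  + (-1)^{m-1} ∫_a^b P_m(x) f^{(m)}(x) dx`. -/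
theorem euler_maclaurin_interval_with_remainder
    (a b : ℤ) (hab : a < b) (m : ℕ) (hm : 1 ≤ m) (f : ℕ → ℝ → ℝ)
    (hderiv : ∀ j < m, ∀ x ∈ Set.Icc (a : ℝ) (b : ℝ), HasDerivAt (f j) (f (j+1) x) x)
    (hcont : ContinuousOn (f m) (Set.Icc (a : ℝ) (b : ℝ))) :
    (∑ x ∈ Finset.Icc a b, (if x = a ∨ x = b then (1/2 : ℝ) else 1) * f 0 (x : ℝ))
      = (∫ x in (a : ℝ)..(b : ℝ), f 0 x)
        + (∑ j ∈ Finset.Icc 1 (m / 2),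
            bernP (2*j) 0 * (f (2*j - 1) (b : ℝ) - f (2*j - 1) (a : ℝ)))
        + (-1 : ℝ) ^ (m - 1) * ∫ x in (a : ℝ)..(b : ℝ), bernP m x * f m x := by
  have key : ∀ c : ℤ, a + 1 ≤ c →
      (∀ j < m, ∀ x ∈ Set.Icc (a : ℝ) (c : ℝ), HasDerivAt (f j) (f (j+1) x) x) →
      ContinuousOn (f m) (Set.Icc (a : ℝ) (c : ℝ)) →
      (∑ x ∈ Finset.Icc a c, (if x = a ∨ x = c then (1/2 : ℝ) else 1) * f 0 (x : ℝ))
        = (∫ x in (a : ℝ)..(c : ℝ), f 0 x)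
          + (∑ j ∈ Finset.Icc 1 (m / 2),
              bernP (2*j) 0 * (f (2*j - 1) (c : ℝ) - f (2*j - 1) (a : ℝ)))
          + (-1 : ℝ) ^ (m - 1) * ∫ x in (a : ℝ)..(c : ℝ), bernP m x * f m x := by
    refine Int.le_induction ?_ ?_
    · intro hd hcnt
      have hcast : ((a+1 : ℤ) : ℝ) = (a:ℝ)+1 := by push_cast; ring
      rw [hcast] at hd hcnt ⊢
      have hunit := euler_maclaurin_unit m hm a f hd hcnt
      rw [sum_Icc_int_succ a a (by omega), Finset.Icc_self, Finset.sum_singleton]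
      rw [if_pos (Or.inl rfl), if_pos (Or.inr rfl), hcast]
      rw [← hunit]
      ring
    · intro b hb ih hd hcnt
      have hcast : ((b+1 : ℤ) : ℝ) = (b:ℝ)+1 := by push_cast; ring
      rw [hcast] at hd hcnt ⊢
      have hab' : (a:ℝ) ≤ (b:ℝ) := by exact_mod_cast (by omega : a ≤ b)
      have s1 : Set.Icc (a:ℝ) (b:ℝ) ⊆ Set.Icc (a:ℝ) ((b:ℝ)+1) :=
        Set.Icc_subset_Icc_right (by linarith)
      have s2 : Set.Icc (b:ℝ) ((b:ℝ)+1) ⊆ Set.Icc (a:ℝ) ((b:ℝ)+1) :=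
        Set.Icc_subset_Icc_left hab'
      have ihh := ih (fun j hj x hx => hd j hj x (s1 hx)) (hcnt.mono s1)
      have hunit := euler_maclaurin_unit m hm b f
        (fun j hj x hx => hd j hj x (s2 hx)) (hcnt.mono s2)
      have hc0 : ContinuousOn (f 0) (Set.Icc (a:ℝ) ((b:ℝ)+1)) := fun x hx =>
        (hd 0 (by omega) x hx).continuousAt.continuousWithinAt
      have hu1 : Set.uIcc (a:ℝ) (b:ℝ) ⊆ Set.Icc (a:ℝ) ((b:ℝ)+1) := by
        rw [Set.uIcc_of_le hab']; exact s1
      have hu2 : Set.uIcc (b:ℝ) ((b:ℝ)+1) ⊆ Set.Icc (a:ℝ) ((b:ℝ)+1) := by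
        rw [Set.uIcc_of_le (by linarith)]; exact s2
      have hI0 := intervalIntegral.integral_add_adjacent_intervals (μ := volume)
        (a := (a:ℝ)) (b := (b:ℝ)) (c := (b:ℝ)+1)
        ((hc0.mono hu1).intervalIntegrable) ((hc0.mono hu2).intervalIntegrable)
      have hIm := intervalIntegral.integral_add_adjacent_intervals (μ := volume)
        (a := (a:ℝ)) (b := (b:ℝ)) (c := (b:ℝ)+1)
        (bernP_mul_intervalIntegrable m _ _ (hcnt.mono hu1))
        (bernP_mul_intervalIntegrable m _ _ (hcnt.mono hu2))
      have htr := trapez_step a b (by omega) (fun x : ℤ => f 0 (x:ℝ))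
      rw [hcast] at htr
      rw [htr]
      have hsum : (∑ j ∈ Finset.Icc 1 (m / 2),
            bernP (2*j) 0 * (f (2*j - 1) ((b:ℝ)+1) - f (2*j - 1) (a:ℝ)))
          = (∑ j ∈ Finset.Icc 1 (m / 2),
              bernP (2*j) 0 * (f (2*j - 1) (b:ℝ) - f (2*j - 1) (a:ℝ)))
            + (∑ j ∈ Finset.Icc 1 (m / 2),
              bernP (2*j) 0 * (f (2*j - 1) ((b:ℝ)+1) - f (2*j - 1) (b:ℝ))) := by
        rw [← Finset.sum_add_distrib]
        apply Finset.sum_congr rfl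
        intro j _
        ring
      rw [hsum]
      linear_combination ihh + hunit + hI0 + ((-1:ℝ))^(m-1) * hIm
  exact key b (by omega) hderiv hcont
end

section
/- Let λ ≠ 1 be a root of unity of order N. Define Q_{1,λ}(x) = (λ/(1-λ))·Σ_{n∈ℤ} λⁿ·1_{[n,n+1]}(x). Then Q_{1,λ} is N-periodic, ∫₀ᴺ Q_{1,λ}(x)dx = 0, and for any C¹ function f of compact support on ℝ, (1/2)f(0) + Σ_{n≥1} λⁿ f(n) = (1/2 + λ/(1-λ))·f(0) + ∫₀^∞ Q_{1,λ}(x) f'(x) dx. -/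
open MeasureTheory

/-- `Q_{1,λ}(x) = (λ/(1-λ))·Σ_{n∈ℤ} λⁿ·1_{[n,n+1]}(x)`, i.e. the function whose
value for `x ∈ (n, n+1)` is `(λ/(1-λ))·λⁿ = (λ/(1-λ))·λ^⌊x⌋`. -/
noncomputable def Qone (lam : ℂ) (x : ℝ) : ℂ := (lam / (1 - lam)) * lam ^ (⌊x⌋ : ℤ)

lemma Qone_ae_eq (lam : ℂ) (n : ℕ) (g : ℝ → ℂ) :
    (fun x => Qone lam x * g x)
      =ᶠ[ae (volume.restrict (Set.Ioc (n:ℝ) ((n:ℝ)+1)))]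
    (fun x => ((lam / (1 - lam)) * lam ^ n) * g x) := by
  have hioo : ∀ x ∈ Set.Ioo (n:ℝ) ((n:ℝ)+1),
      Qone lam x * g x = ((lam / (1 - lam)) * lam ^ n) * g x := by
    intro x hx
    have hfl : ⌊x⌋ = (n : ℤ) := by
      rw [Int.floor_eq_iff]
      constructor
      · push_cast; exact hx.1.le
      · push_cast; exact hx.2
    simp [Qone, hfl, zpow_natCast]
  have hset : volume.restrict (Set.Ioc (n:ℝ) ((n:ℝ)+1))
      = volume.restrict (Set.Ioo (n:ℝ) ((n:ℝ)+1)) :=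
    (Measure.restrict_congr_set Ioo_ae_eq_Ioc).symm
  rw [hset]
  exact ae_restrict_of_forall_mem measurableSet_Ioo hioo

lemma Qone_intervalIntegrable (lam : ℂ) (n : ℕ) (g : ℝ → ℂ) (hg : Continuous g) :
    IntervalIntegrable (fun x => Qone lam x * g x) volume (n:ℝ) ((n:ℝ)+1) := by
  rw [intervalIntegrable_iff, Set.uIoc_of_le (by linarith : (n:ℝ) ≤ (n:ℝ)+1)]
  exact (((continuous_const.mul hg).integrableOn_Ioc)).congr ((Qone_ae_eq lam n g).symm)

lemma Qone_integral (lam : ℂ) (n : ℕ) (g : ℝ → ℂ) :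
    ∫ x in (n:ℝ)..((n:ℝ)+1), Qone lam x * g x
      = (lam / (1 - lam)) * lam ^ n * ∫ x in (n:ℝ)..((n:ℝ)+1), g x := by
  rw [intervalIntegral.integral_of_le (by linarith : (n:ℝ) ≤ (n:ℝ)+1),
      intervalIntegral.integral_of_le (by linarith : (n:ℝ) ≤ (n:ℝ)+1),
      integral_congr_ae (Qone_ae_eq lam n g), integral_const_mul]

/-- Twisted first-order Euler–Maclaurin for a ray: if `λ ≠ 1` is a root of unity of
order `N`, then `Q_{1,λ}` is `N`-periodic with mean zero over `[0,N]`, and for any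
`C¹` function `f` of compact support,
`(1/2)f(0) + Σ_{n≥1} λⁿ f(n) = (1/2 + λ/(1-λ))f(0) + ∫₀^∞ Q_{1,λ}(x) f'(x) dx`. -/
theorem twisted_EM_ray_first_order
    (N : ℕ) (hN : 0 < N) (lam : ℂ) (hroot : lam ^ N = 1) (hne : lam ≠ 1)
    (f : ℝ → ℂ) (hf : ContDiff ℝ 1 f) (hsupp : HasCompactSupport f) :
    Function.Periodic (Qone lam) (N : ℝ) ∧
    (∫ x in (0:ℝ)..(N : ℝ), Qone lam x) = 0 ∧
    (1/2) * f 0 + (∑' n : ℕ, lam ^ (n + 1) * f ((n : ℝ) + 1))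
      = (1/2 + lam / (1 - lam)) * f 0 + ∫ x in Set.Ioi (0:ℝ), Qone lam x * deriv f x := by
  have hlam0 : lam ≠ 0 := by
    intro h; rw [h, zero_pow hN.ne'] at hroot; exact zero_ne_one hroot
  have hsub : (1 : ℂ) - lam ≠ 0 := sub_ne_zero.mpr (Ne.symm hne)
  set c : ℂ := lam / (1 - lam) with hc
  -- Periodicity
  have hper : Function.Periodic (Qone lam) (N : ℝ) := by
    intro x
    unfold Qone
    rw [Int.floor_add_natCast, zpow_add₀ hlam0, zpow_natCast, hroot, mul_one]
  refine ⟨hper, ?_, ?_⟩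
  · -- mean zero
    have hQint : ∀ n : ℕ, (∫ x in (n:ℝ)..((n:ℝ)+1), Qone lam x) = c * lam ^ n := by
      intro n
      have h1 := Qone_integral lam n (fun _ => (1:ℂ))
      simp only [mul_one] at h1
      rw [h1]
      simp [hc]
    have hQii : ∀ k : ℕ, k < N →
        IntervalIntegrable (Qone lam) volume ((k:ℕ):ℝ) (((k+1:ℕ)):ℝ) := by
      intro k _
      have := Qone_intervalIntegrable lam k (fun _ => (1:ℂ)) continuous_const
      simp only [mul_one] at this
      push_cast
      exact this
    have hsum := intervalIntegral.sum_integral_adjacent_intervals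
      (a := fun k : ℕ => (k:ℝ)) (n := N) hQii
    simp only [Nat.cast_zero] at hsum
    rw [← hsum]
    have : ∀ k ∈ Finset.range N,
        (∫ x in ((k:ℕ):ℝ)..(((k+1:ℕ)):ℝ), Qone lam x) = c * lam ^ k := by
      intro k _
      push_cast
      exact hQint k
    rw [Finset.sum_congr rfl this, ← Finset.mul_sum, geom_sum_eq hne, hroot,
      sub_self, zero_div, mul_zero]
  · -- main identity
    have hcont' : Continuous (deriv f) := hf.continuous_deriv le_rfl
    obtain ⟨R1, hR1pos, hR1⟩ := hsupp.exists_pos_le_norm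
    obtain ⟨R2, hR2pos, hR2⟩ := hsupp.deriv.exists_pos_le_norm
    set M : ℕ := ⌈max R1 R2⌉₊ with hMdef
    have hMR1 : R1 ≤ (M:ℝ) := le_trans (le_max_left _ _) (Nat.le_ceil _)
    have hMR2 : R2 ≤ (M:ℝ) := le_trans (le_max_right _ _) (Nat.le_ceil _)
    have hfM : ∀ x : ℝ, (M:ℝ) ≤ x → f x = 0 := fun x hx =>
      hR1 x (by rw [Real.norm_eq_abs]; exact le_trans (le_trans hMR1 hx) (le_abs_self x))
    have hdM : ∀ x : ℝ, (M:ℝ) ≤ x → deriv f x = 0 := fun x hx =>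
      hR2 x (by rw [Real.norm_eq_abs]; exact le_trans (le_trans hMR2 hx) (le_abs_self x))
    -- the tsum is a finite sum
    have htsum : (∑' n : ℕ, lam ^ (n + 1) * f ((n : ℝ) + 1))
        = ∑ n ∈ Finset.range M, lam ^ (n + 1) * f ((n : ℝ) + 1) := by
      apply tsum_eq_sum
      intro b hb
      have hb' : M ≤ b := not_lt.mp (fun h => hb (Finset.mem_range.mpr h))
      have : (M:ℝ) ≤ (b:ℝ) + 1 := by
        have h2 : (M:ℝ) ≤ (b:ℝ) := Nat.cast_le.mpr hb'
        linarith
      rw [hfM _ this, mul_zero]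
    -- reduce integral over Ioi 0 to [0,M]
    have hIoi : (∫ x in Set.Ioi (0:ℝ), Qone lam x * deriv f x)
        = ∫ x in (0:ℝ)..(M:ℝ), Qone lam x * deriv f x := by
      rw [intervalIntegral.integral_of_le (by positivity : (0:ℝ) ≤ (M:ℝ))]
      have step1 : (∫ x in Set.Ioi (0:ℝ), Qone lam x * deriv f x)
          = ∫ x in Set.Ioi (0:ℝ),
              (Set.Ioc (0:ℝ) (M:ℝ)).indicator (fun x => Qone lam x * deriv f x) x := by
        apply setIntegral_congr_fun measurableSet_Ioi
        intro x hx
        show Qone lam x * deriv f x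
          = (Set.Ioc (0:ℝ) (M:ℝ)).indicator (fun x => Qone lam x * deriv f x) x
        by_cases hxM : x ≤ (M:ℝ)
        · rw [Set.indicator_of_mem (show x ∈ Set.Ioc (0:ℝ) (M:ℝ) from ⟨hx, hxM⟩)]
        · rw [Set.indicator_of_notMem (fun hmem => hxM hmem.2),
            hdM x (not_le.mp hxM).le, mul_zero]
      rw [step1, setIntegral_indicator measurableSet_Ioc,
        Set.inter_eq_self_of_subset_right Set.Ioc_subset_Ioi_self]
    -- split into unit intervals
    have hii : ∀ k : ℕ, k < M →
        IntervalIntegrable (fun x => Qone lam x * deriv f x) volume ((k:ℕ):ℝ) (((k+1:ℕ)):ℝ) := by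
      intro k _
      push_cast
      exact Qone_intervalIntegrable lam k (deriv f) hcont'
    have hsum := intervalIntegral.sum_integral_adjacent_intervals
      (a := fun k : ℕ => (k:ℝ)) (n := M) hii
    simp only [Nat.cast_zero] at hsum
    have hdiff : Differentiable ℝ f := hf.differentiable one_ne_zero
    have hterm : ∀ k ∈ Finset.range M,
        (∫ x in ((k:ℕ):ℝ)..(((k+1:ℕ)):ℝ), Qone lam x * deriv f x)
        = c * lam ^ k * (f ((k:ℝ) + 1) - f (k:ℝ)) := by
      intro k _
      push_cast
      rw [Qone_integral lam k (deriv f),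
        intervalIntegral.integral_deriv_eq_sub (fun x _ => hdiff x)
          (hcont'.intervalIntegrable _ _)]
    rw [hIoi, ← hsum, Finset.sum_congr rfl hterm, htsum]
    -- algebra
    have hexp : ∀ k ∈ Finset.range M,
        c * lam ^ k * (f ((k:ℝ) + 1) - f (k:ℝ))
        = lam ^ (k + 1) * f ((k:ℝ) + 1)
          + (c * lam ^ (k+1) * f ((k:ℝ)+1) - c * lam ^ k * f (k:ℝ)) := by
      intro k _
      simp only [hc]
      field_simp
      ring
    have htel : ∑ k ∈ Finset.range M,
        (c * lam ^ (k+1) * f ((k:ℝ)+1) - c * lam ^ k * f (k:ℝ))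
        = c * lam ^ M * f (M:ℝ) - c * f 0 := by
      have h := Finset.sum_range_sub (fun j : ℕ => c * lam ^ j * f (j:ℝ)) M
      push_cast at h
      simpa using h
    rw [Finset.sum_congr rfl hexp, Finset.sum_add_distrib, htel, hfM (M:ℝ) le_rfl]
    ring
end

section
/- Let λ ≠ 1 be a root of unity, k ≥ 1 an integer, and define the polynomial M^{k,λ}(S) = (1/2 + λ/(1-λ))S + Q_{2,λ}(0)S² + ... + Q_{k,λ}(0)S^k. Then for any f ∈ C_c^k(ℝ), (1/2)f(0) + Σ_{n≥1} λⁿ f(n) = [M^{k,λ}(∂/∂h) ∫_{-h}^∞ f(x)dx]|_{h=0} + (-1)^{k-1} ∫₀^∞ Q_{k,λ}(x) f^{(k)}(x) dx. -/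
open MeasureTheory
open scoped BigOperators


lemma q1_step (lam : ℂ) (Q1 : ℝ → ℂ)
    (hQ1 : ∀ x : ℝ, Q1 x = (lam / (1 - lam)) * lam ^ (⌊x⌋ : ℤ))
    (f : ℝ → ℂ) (hf : ContDiff ℝ 1 f) (n : ℕ) :
    ∫ x in (n:ℝ)..((n:ℝ)+1), Q1 x * deriv f x
      = (lam / (1 - lam)) * lam ^ n * (f ((n:ℝ)+1) - f n) := by
  have hne : ∀ᵐ x : ℝ, x ≠ (n:ℝ)+1 := by
    rw [ae_iff]
    simpa using (Real.volume_singleton (x := (n:ℝ)+1))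
  have h1 : ∫ x in (n:ℝ)..((n:ℝ)+1), Q1 x * deriv f x
      = ∫ x in (n:ℝ)..((n:ℝ)+1), ((lam / (1 - lam)) * lam ^ n) * deriv f x := by
    rw [intervalIntegral.integral_of_le (by linarith), intervalIntegral.integral_of_le (by linarith)]
    refine integral_congr_ae ?_
    filter_upwards [ae_restrict_mem measurableSet_Ioc, ae_restrict_of_ae hne] with x hx hx'
    have hfl : ⌊x⌋ = (n : ℤ) := by
      rw [Int.floor_eq_iff]
      constructor
      · exact_mod_cast hx.1.le
      · push_cast
        exact lt_of_le_of_ne hx.2 hx'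
    rw [hQ1 x, hfl, zpow_natCast]
  rw [h1, intervalIntegral.integral_const_mul,
    intervalIntegral.integral_deriv_eq_sub
      (fun x _ => (hf.differentiable one_ne_zero).differentiableAt)
      ((hf.continuous_deriv le_rfl).intervalIntegrable _ _)]


-- integrability of Q m * ψ
lemma qmul_intble (lam : ℂ) (hlam : ‖lam‖ = 1) (Q : ℕ → ℝ → ℂ)
    (hQ1 : ∀ x : ℝ, Q 1 x = (lam / (1 - lam)) * lam ^ (⌊x⌋ : ℤ))
    (hQcont : ∀ m, 2 ≤ m → Continuous (Q m))
    (m : ℕ) (hm : 1 ≤ m) (ψ : ℝ → ℂ) (hψ : Continuous ψ) (u v : ℝ) :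
    IntervalIntegrable (fun x => Q m x * ψ x) volume u v := by
  rcases eq_or_lt_of_le hm with h1 | h2
  · -- m = 1
    subst h1
    rw [intervalIntegrable_iff]
    refine Integrable.bdd_mul (c := ‖lam / (1 - lam)‖) (hψ.intervalIntegrable u v).def' ?_ ?_
    · refine Measurable.aestronglyMeasurable ?_
      have : Measurable fun x : ℝ => (lam / (1 - lam)) * lam ^ (⌊x⌋ : ℤ) :=
        measurable_const.mul ((measurable_from_top (f := fun n : ℤ => lam ^ n)).comp
          Int.measurable_floor)
      simpa only [funext hQ1] using this
    · refine Filter.Eventually.of_forall (fun x => ?_)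
      rw [hQ1 x, norm_mul, norm_zpow, hlam, one_zpow, mul_one]
  · -- 2 ≤ m
    exact (((hQcont m h2).mul hψ)).intervalIntegrable u v


lemma ftc_unit (Q : ℕ → ℝ → ℂ)
    (hQcont : ∀ m, 2 ≤ m → Continuous (Q m))
    (hQderiv : ∀ m, 2 ≤ m → ∀ x : ℝ, Int.fract x ≠ 0 → HasDerivAt (Q m) (Q (m - 1) x) x)
    (m : ℕ) (hm : 2 ≤ m) (g g' : ℝ → ℂ) (hg : ∀ x, HasDerivAt g (g' x) x)
    (hgc : Continuous g)
    (n : ℕ)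
    (hint : IntervalIntegrable (fun x => Q (m-1) x * g x + Q m x * g' x) volume (n:ℝ) ((n:ℝ)+1)) :
    ∫ x in (n:ℝ)..((n:ℝ)+1), (Q (m-1) x * g x + Q m x * g' x)
      = Q m ((n:ℝ)+1) * g ((n:ℝ)+1) - Q m (n:ℝ) * g (n:ℝ) := by
  refine intervalIntegral.integral_eq_sub_of_hasDeriv_right_of_le (by linarith)
    (((hQcont m hm).mul hgc).continuousOn) (fun x hx => ?_) hint
  have hfr : Int.fract x ≠ 0 := by
    intro h0
    have hxf : x = (⌊x⌋ : ℝ) := by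
      have := Int.fract x
      unfold Int.fract at h0
      linarith [sub_eq_zero.mp h0]
    have hfl : ⌊x⌋ = (n : ℤ) := by
      rw [Int.floor_eq_iff]
      constructor
      · exact_mod_cast hx.1.le
      · push_cast
        exact hx.2
    rw [hfl] at hxf
    have : (n:ℝ) < x := hx.1
    rw [hxf] at this
    exact lt_irrefl _ (by exact_mod_cast this)
  exact ((hQderiv m hm x hfr).mul (hg x)).hasDerivWithinAt

lemma EM_aux (lam : ℂ) (hlam : ‖lam‖ = 1) (hne : lam ≠ 1) (Q : ℕ → ℝ → ℂ)
    (hQ1 : ∀ x : ℝ, Q 1 x = (lam / (1 - lam)) * lam ^ (⌊x⌋ : ℤ))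
    (hQcont : ∀ m, 2 ≤ m → Continuous (Q m))
    (hQderiv : ∀ m, 2 ≤ m → ∀ x : ℝ, Int.fract x ≠ 0 → HasDerivAt (Q m) (Q (m - 1) x) x)
    (b : ℕ) (f : ℝ → ℂ)
    (hvan : ∀ (m : ℕ) (x : ℝ), (b:ℝ) ≤ x → iteratedDeriv m f x = 0) :
    ∀ k : ℕ, 1 ≤ k → ContDiff ℝ k f →
    (1/2) * f 0 + ∑ n ∈ Finset.range b, lam ^ (n + 1) * f ((n:ℝ) + 1)
      = (∑ m ∈ Finset.Icc 1 k,
          (if m = 1 then 1/2 + lam / (1 - lam) else Q m 0) *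
            ((-1:ℂ) ^ (m-1) * iteratedDeriv (m-1) f 0))
        + (-1 : ℂ) ^ (k - 1) * ∫ x in (0:ℝ)..(b:ℝ), Q k x * iteratedDeriv k f x := by
  have hsub : (1 : ℂ) - lam ≠ 0 := sub_ne_zero.2 (Ne.symm hne)
  have hc : lam / (1 - lam) * (1 - lam) = lam := div_mul_cancel₀ _ hsub
  set c : ℂ := lam / (1 - lam) with hcdef
  refine Nat.le_induction ?_ ?_
  · -- base case k = 1
    intro hf1
    have hsplit : ∫ x in (0:ℝ)..(b:ℝ), Q 1 x * iteratedDeriv 1 f x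
        = ∑ n ∈ Finset.range b, c * lam ^ n * (f ((n:ℝ)+1) - f (n:ℝ)) := by
      have hadj := intervalIntegral.sum_integral_adjacent_intervals
        (f := fun x => Q 1 x * iteratedDeriv 1 f x) (μ := volume)
        (a := fun i : ℕ => (i:ℝ)) (n := b)
        (fun i _ => by
          push_cast
          exact qmul_intble lam hlam Q hQ1 hQcont 1 le_rfl _
            (hf1.continuous_iteratedDeriv 1 le_rfl) _ _)
      simp only [Nat.cast_zero, Nat.cast_add, Nat.cast_one] at hadj
      rw [← hadj]
      refine Finset.sum_congr rfl fun n _ => ?_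
      have h := q1_step lam (Q 1) hQ1 f hf1 n
      simp only [iteratedDeriv_one]
      rw [h]
    have hkey : ∀ n : ℕ, c * lam ^ n * (f ((n:ℝ)+1) - f (n:ℝ))
        = lam ^ (n+1) * f ((n:ℝ)+1)
          + (c * lam ^ (n+1) * f (((n+1 : ℕ)):ℝ) - c * lam ^ n * f ((n:ℕ):ℝ)) := by
      intro n
      push_cast
      linear_combination (lam ^ n * f ((n:ℝ)+1)) * hc
    have hfb : f ((b:ℕ):ℝ) = 0 := by
      simpa using hvan 0 (b:ℝ) le_rfl
    have hsum2 : ∑ n ∈ Finset.range b, c * lam ^ n * (f ((n:ℝ)+1) - f (n:ℝ))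
        = (∑ n ∈ Finset.range b, lam ^ (n+1) * f ((n:ℝ)+1)) - c * f 0 := by
      calc ∑ n ∈ Finset.range b, c * lam ^ n * (f ((n:ℝ)+1) - f (n:ℝ))
          = ∑ n ∈ Finset.range b, (lam ^ (n+1) * f ((n:ℝ)+1)
            + ((fun j : ℕ => c * lam ^ j * f ((j:ℕ):ℝ)) (n+1)
              - (fun j : ℕ => c * lam ^ j * f ((j:ℕ):ℝ)) n)) :=
            Finset.sum_congr rfl fun n _ => by simpa using hkey n
        _ = (∑ n ∈ Finset.range b, lam ^ (n+1) * f ((n:ℝ)+1))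
            + (c * lam ^ b * f ((b:ℕ):ℝ) - c * lam ^ 0 * f ((0:ℕ):ℝ)) := by
            rw [Finset.sum_add_distrib,
              Finset.sum_range_sub (fun j : ℕ => c * lam ^ j * f ((j:ℕ):ℝ))]
        _ = (∑ n ∈ Finset.range b, lam ^ (n+1) * f ((n:ℝ)+1)) - c * f 0 := by
            rw [hfb]
            push_cast
            ring
    rw [hsplit, hsum2]
    simp only [Finset.Icc_self, Finset.sum_singleton, if_pos rfl, Nat.sub_self,
      pow_zero, iteratedDeriv_zero, one_mul, ite_true]
    ring
  · -- inductive step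
    intro k hk IH hfk1
    have hfk : ContDiff ℝ k f := hfk1.of_le (by exact_mod_cast Nat.le_succ k)
    have hEk := IH hfk
    set g := iteratedDeriv k f with hgdef
    set g' := iteratedDeriv (k+1) f with hg'def
    have hgc : Continuous g := hfk.continuous_iteratedDeriv k le_rfl
    have hg'c : Continuous g' := hfk1.continuous_iteratedDeriv (k+1) le_rfl
    have hg : ∀ x, HasDerivAt g (g' x) x := by
      intro x
      have hd := (hfk1.differentiable_iteratedDeriv k (by exact_mod_cast lt_add_one k)) x
      have : g' x = deriv g x := by rw [hg'def, iteratedDeriv_succ]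
      rw [this]
      exact hd.hasDerivAt
    have hintn : ∀ (u v : ℝ),
        IntervalIntegrable (fun x => Q k x * g x + Q (k+1) x * g' x) volume u v :=
      fun u v => (qmul_intble lam hlam Q hQ1 hQcont k hk g hgc u v).add
        (qmul_intble lam hlam Q hQ1 hQcont (k+1) (by omega) g' hg'c u v)
    have hIBP : ∫ x in (0:ℝ)..(b:ℝ), Q k x * g x
        = -(Q (k+1) 0 * g 0) - ∫ x in (0:ℝ)..(b:ℝ), Q (k+1) x * g' x := by
      have hadj := intervalIntegral.sum_integral_adjacent_intervals
        (f := fun x => Q k x * g x + Q (k+1) x * g' x) (μ := volume)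
        (a := fun i : ℕ => (i:ℝ)) (n := b)
        (fun i _ => by push_cast; exact hintn _ _)
      simp only [Nat.cast_zero, Nat.cast_add, Nat.cast_one] at hadj
      have hterm : ∀ n : ℕ, (∫ x in ((n:ℕ):ℝ)..((n:ℝ)+1),
            (Q k x * g x + Q (k+1) x * g' x))
          = (fun j : ℕ => Q (k+1) ((j:ℕ):ℝ) * g ((j:ℕ):ℝ)) (n+1)
            - (fun j : ℕ => Q (k+1) ((j:ℕ):ℝ) * g ((j:ℕ):ℝ)) n := by
        intro n
        have := ftc_unit Q hQcont hQderiv (k+1) (by omega) g g' hg hgc n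
          (by simpa using hintn (n:ℝ) ((n:ℝ)+1))
        push_cast
        simpa using this
      have hsum : ∑ n ∈ Finset.range b, (∫ x in ((n:ℕ):ℝ)..((n:ℝ)+1),
            (Q k x * g x + Q (k+1) x * g' x))
          = Q (k+1) ((b:ℕ):ℝ) * g ((b:ℕ):ℝ) - Q (k+1) ((0:ℕ):ℝ) * g ((0:ℕ):ℝ) := by
        rw [Finset.sum_congr rfl fun n _ => hterm n,
          Finset.sum_range_sub (fun j : ℕ => Q (k+1) ((j:ℕ):ℝ) * g ((j:ℕ):ℝ))]
      have hgb : g ((b:ℕ):ℝ) = 0 := hvan k (b:ℝ) le_rfl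
      rw [hsum, hgb] at hadj
      have hsplitadd : ∫ x in (0:ℝ)..(b:ℝ), (Q k x * g x + Q (k+1) x * g' x)
          = (∫ x in (0:ℝ)..(b:ℝ), Q k x * g x)
            + ∫ x in (0:ℝ)..(b:ℝ), Q (k+1) x * g' x :=
        intervalIntegral.integral_add
          (qmul_intble lam hlam Q hQ1 hQcont k hk g hgc _ _)
          (qmul_intble lam hlam Q hQ1 hQcont (k+1) (by omega) g' hg'c _ _)
      rw [hsplitadd] at hadj
      push_cast at hadj
      linear_combination -hadj
    rw [Finset.sum_Icc_succ_top (by omega : 1 ≤ k+1), hEk, hIBP,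
      if_neg (by omega : ¬ (k+1 = 1))]
    simp only [Nat.add_sub_cancel]
    obtain ⟨j, rfl⟩ := Nat.exists_eq_add_of_le hk
    simp only [Nat.add_sub_cancel_left]
    ring


/-- Twisted Euler–Maclaurin formula with remainder for a ray. Here `λ ≠ 1` is a root
of unity of order `N`, and `Q m` (for `m ≥ 1`) are the `N`-periodic successive
antiderivatives (with mean zero over a period) of `-Σ_n λⁿ δ(x-n)`, starting from
`Q_{1,λ}(x) = (λ/(1-λ))λ^⌊x⌋`.  With
`M^{k,λ}(S) = (1/2 + λ/(1-λ))S + Q_{2,λ}(0)S² + ⋯ + Q_{k,λ}(0)S^k`, for `f ∈ C_c^k(ℝ)`: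
`(1/2)f(0) + Σ_{n≥1} λⁿ f(n) = [M^{k,λ}(∂/∂h) ∫_{-h}^∞ f]|_{h=0}
  + (-1)^{k-1} ∫₀^∞ Q_{k,λ}(x) f^{(k)}(x) dx`. -/
theorem twisted_EM_ray_with_remainder
    (N : ℕ) (hN : 0 < N) (lam : ℂ) (hroot : lam ^ N = 1) (hne : lam ≠ 1)
    (k : ℕ) (hk : 1 ≤ k) (Q : ℕ → ℝ → ℂ)
    (hQ1 : ∀ x : ℝ, Q 1 x = (lam / (1 - lam)) * lam ^ (⌊x⌋ : ℤ))
    (hQper : ∀ m, 1 ≤ m → Function.Periodic (Q m) (N : ℝ))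
    (hQcont : ∀ m, 2 ≤ m → Continuous (Q m))
    (hQderiv : ∀ m, 2 ≤ m → ∀ x : ℝ, Int.fract x ≠ 0 → HasDerivAt (Q m) (Q (m - 1) x) x)
    (hQint : ∀ m, 2 ≤ m → (∫ x in (0:ℝ)..(N : ℝ), Q m x) = 0)
    (f : ℝ → ℂ) (hf : ContDiff ℝ k f) (hsupp : HasCompactSupport f) :
    (1/2) * f 0 + (∑' n : ℕ, lam ^ (n + 1) * f ((n : ℝ) + 1))
      = (∑ m ∈ Finset.Icc 1 k,
          (if m = 1 then 1/2 + lam / (1 - lam) else Q m 0) *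
            iteratedDeriv m (fun h : ℝ => ∫ x in Set.Ioi (-h), f x) 0)
        + (-1 : ℂ) ^ (k - 1) * ∫ x in Set.Ioi (0:ℝ), Q k x * iteratedDeriv k f x := by
  have hlam : ‖lam‖ = 1 := Complex.norm_eq_one_of_pow_eq_one hroot hN.ne'
  -- choose a cutoff natural number b beyond the support of f
  obtain ⟨R, hR⟩ := hsupp.isCompact.isBounded.subset_closedBall 0
  set b : ℕ := ⌈R⌉₊ + 1 with hbdef
  have hRb : R < (b : ℝ) := by
    calc R ≤ (⌈R⌉₊ : ℝ) := Nat.le_ceil R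
    _ < (b : ℝ) := by rw [hbdef]; push_cast; linarith
  have hfz : ∀ y : ℝ, R < y → f y = 0 := by
    intro y hy
    by_contra hfy
    have : y ∈ Metric.closedBall (0:ℝ) R :=
      hR (subset_tsupport f (Function.mem_support.2 hfy))
    rw [Metric.mem_closedBall, Real.dist_eq, sub_zero] at this
    exact absurd (lt_of_lt_of_le hy (le_trans (le_abs_self y) this)) (lt_irrefl _)
  have hvan : ∀ (m : ℕ) (x : ℝ), (b:ℝ) ≤ x → iteratedDeriv m f x = 0 := by
    intro m x hx
    have hev : f =ᶠ[nhds x] (fun _ => (0:ℂ)) := by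
      refine Filter.eventuallyEq_of_mem (Ioi_mem_nhds (lt_of_lt_of_le hRb hx)) ?_
      intro y hy
      exact hfz y hy
    rw [Filter.EventuallyEq.iteratedDeriv_eq m hev]
    simp [iteratedDeriv_eq_iteratedFDeriv, iteratedFDeriv_zero_fun]
  have hf0 : ∀ x : ℝ, (b:ℝ) ≤ x → f x = 0 := by
    intro x hx; simpa using hvan 0 x hx
  -- tsum as a finite sum
  have htsum : (∑' n : ℕ, lam ^ (n + 1) * f ((n : ℝ) + 1))
      = ∑ n ∈ Finset.range b, lam ^ (n + 1) * f ((n:ℝ) + 1) := by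
    refine tsum_eq_sum fun n hn => ?_
    rw [Finset.mem_range, not_lt] at hn
    rw [hf0 ((n:ℝ)+1) (by exact_mod_cast Nat.le_succ_of_le hn), mul_zero]
  -- the iterated derivatives of h ↦ ∫_{-h}^∞ f
  have hf_int : Integrable f := hf.continuous.integrable_of_hasCompactSupport hsupp
  have hgfun : (fun h : ℝ => ∫ x in Set.Ioi (-h), f x)
      = fun h : ℝ => ∫ x in (-h)..(b:ℝ), f x := by
    funext h
    by_cases hhb : -h ≤ (b:ℝ)
    · have hzero : (∫ x in Set.Ioi (b:ℝ), f x) = 0 :=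
        setIntegral_eq_zero_of_forall_eq_zero (fun x hx => hf0 x (le_of_lt hx))
      have hu : (∫ x in Set.Ioi (-h), f x)
          = (∫ x in Set.Ioc (-h) (b:ℝ), f x) + ∫ x in Set.Ioi (b:ℝ), f x := by
        rw [← Set.Ioc_union_Ioi_eq_Ioi hhb]
        exact setIntegral_union (Set.Ioc_disjoint_Ioi le_rfl) measurableSet_Ioi
          hf_int.integrableOn hf_int.integrableOn
      rw [hu, hzero, add_zero, intervalIntegral.integral_of_le hhb]
    · push_neg at hhb
      have h1 : (∫ x in Set.Ioi (-h), f x) = 0 :=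
        setIntegral_eq_zero_of_forall_eq_zero
          (fun x hx => hf0 x (le_trans hhb.le (le_of_lt hx)))
      have h2 : (∫ x in Set.Ioc (b:ℝ) (-h), f x) = 0 :=
        setIntegral_eq_zero_of_forall_eq_zero (fun x hx => hf0 x hx.1.le)
      rw [h1, intervalIntegral.integral_symm, intervalIntegral.integral_of_le hhb.le, h2,
        neg_zero]
  have hgderiv : deriv (fun h : ℝ => ∫ x in Set.Ioi (-h), f x) = fun h : ℝ => f (-h) := by
    rw [hgfun]
    funext h'
    refine HasDerivAt.deriv ?_
    have hF : ∀ u : ℝ, HasDerivAt (fun u : ℝ => ∫ x in u..(b:ℝ), f x) (-f u) u := fun u =>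
      intervalIntegral.integral_hasDerivAt_left hf_int.intervalIntegrable
        (hf.continuous.stronglyMeasurableAtFilter _ _) hf.continuous.continuousAt
    have h2 := HasDerivAt.comp_const_sub 0 h' (by simpa using hF (-h'))
    have heq : (fun x : ℝ => (fun u : ℝ => ∫ x in u..(b:ℝ), f x) (0 - x))
        = fun h : ℝ => ∫ x in (-h)..(b:ℝ), f x := by
      funext x; rw [zero_sub]
    rw [heq] at h2
    simpa using h2
  have hiter : ∀ m : ℕ, 1 ≤ m →
      iteratedDeriv m (fun h : ℝ => ∫ x in Set.Ioi (-h), f x) 0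
        = (-1:ℂ) ^ (m-1) * iteratedDeriv (m-1) f 0 := by
    intro m hm
    obtain ⟨j, rfl⟩ := Nat.exists_eq_add_of_le hm
    rw [Nat.add_comm 1 j, iteratedDeriv_succ', hgderiv, Nat.add_sub_cancel]
    have := iteratedDeriv_comp_neg j f 0
    rw [this, neg_zero]
    rw [Complex.real_smul]
    push_cast
    ring
  -- the remainder integral as an interval integral
  have hDk : Continuous (iteratedDeriv k f) := hf.continuous_iteratedDeriv k le_rfl
  have hb0 : (0:ℝ) ≤ (b:ℝ) := Nat.cast_nonneg b
  have hIoi : (∫ x in Set.Ioi (0:ℝ), Q k x * iteratedDeriv k f x)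
      = ∫ x in (0:ℝ)..(b:ℝ), Q k x * iteratedDeriv k f x := by
    have hz : ∀ x ∈ Set.Ioi (b:ℝ), Q k x * iteratedDeriv k f x = 0 := fun x hx => by
      rw [hvan k x (le_of_lt hx), mul_zero]
    have hu : (∫ x in Set.Ioi (0:ℝ), Q k x * iteratedDeriv k f x)
        = (∫ x in Set.Ioc (0:ℝ) (b:ℝ), Q k x * iteratedDeriv k f x)
          + ∫ x in Set.Ioi (b:ℝ), Q k x * iteratedDeriv k f x := by
      rw [← Set.Ioc_union_Ioi_eq_Ioi hb0]
      exact setIntegral_union (Set.Ioc_disjoint_Ioi le_rfl) measurableSet_Ioi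
        ((intervalIntegrable_iff_integrableOn_Ioc_of_le hb0).1
          (qmul_intble lam hlam Q hQ1 hQcont k hk _ hDk 0 (b:ℝ)))
        ((integrableOn_congr_fun hz measurableSet_Ioi).2 (integrableOn_zero))
    rw [hu, setIntegral_eq_zero_of_forall_eq_zero hz, add_zero,
      intervalIntegral.integral_of_le hb0]
  have hsum_eq : (∑ m ∈ Finset.Icc 1 k,
        (if m = 1 then 1/2 + lam / (1 - lam) else Q m 0) *
          iteratedDeriv m (fun h : ℝ => ∫ x in Set.Ioi (-h), f x) 0)
      = ∑ m ∈ Finset.Icc 1 k,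
        (if m = 1 then 1/2 + lam / (1 - lam) else Q m 0) *
          ((-1:ℂ) ^ (m-1) * iteratedDeriv (m-1) f 0) :=
    Finset.sum_congr rfl (fun m hm => by rw [hiter m (Finset.mem_Icc.1 hm).1])
  rw [htsum, hIoi, hsum_eq]
  exact EM_aux lam hlam hne Q hQ1 hQcont hQderiv b f hvan k hk hf
end

section
/- Let u₁,...,uₙ be a basis of ℝⁿ* of primitive dual-lattice vectors, α₁,...,αₙ the dual basis, Γ = (ℤⁿ)*/Σℤuᵢ, v ∈ ℤⁿ, and C = v + Σⱼ ℝ_{≥0}αⱼ the corresponding simple integral orthant. Then for any compactly supported function f on ℝⁿ, the weighted lattice sum over C satisfies Σ'_{C∩ℤⁿ} f = (1/|Γ|) Σ_{γ∈Γ} Σ'_x e^{2πi⟨γ,x⟩} f(x), where the inner weighted sum runs over all x = v + m₁α₁ + ... + mₙαₙ with mᵢ nonnegative integers. -/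
open scoped BigOperators
attribute [local instance] Classical.propDecidable

lemma exp_two_pi_int (z : ℤ) : Complex.exp (2 * (Real.pi : ℂ) * Complex.I * (z : ℂ)) = 1 := by
  rw [show (2 * (Real.pi : ℂ) * Complex.I * (z : ℂ)) = (z : ℂ) * (2 * (Real.pi : ℂ) * Complex.I) by ring]
  exact Complex.exp_int_mul_two_pi_mul_I z

lemma dual_reconstruct {n : ℕ} (u : Fin n → Fin n → ℤ) (α : Fin n → Fin n → ℝ)
    (hdual : ∀ i j, (∑ k, (u i k : ℝ) * α j k) = if i = j then 1 else 0)
    (y : Fin n → ℝ) (k : Fin n) :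
    ∑ j, (∑ k', (u j k' : ℝ) * y k') * α j k = y k := by
  classical
  set U : Matrix (Fin n) (Fin n) ℝ := fun i k => (u i k : ℝ) with hU
  set A : Matrix (Fin n) (Fin n) ℝ := fun k j => α j k with hA
  have hUA : U * A = 1 := by
    ext i j
    rw [Matrix.mul_apply, Matrix.one_apply]; exact hdual i j
  have hAU : A * U = 1 := mul_eq_one_comm.mp hUA
  have h1 : ∑ j, (∑ k', (u j k' : ℝ) * y k') * α j k
      = ∑ k', (A * U) k k' * y k' := by
    simp only [Matrix.mul_apply, Finset.sum_mul]
    rw [Finset.sum_comm]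
    exact Finset.sum_congr rfl fun k' _ => Finset.sum_congr rfl fun j _ => by simp only [hU, hA]; ring
  rw [h1, hAU]
  simp [Matrix.one_apply]

lemma pairing_eval {n : ℕ} (u : Fin n → Fin n → ℤ) (α : Fin n → Fin n → ℝ)
    (hdual : ∀ i j, (∑ k, (u i k : ℝ) * α j k) = if i = j then 1 else 0)
    (v : Fin n → ℤ) (m : Fin n → ℝ) (j : Fin n) :
    (∑ k, (u j k : ℝ) * ((v k : ℝ) + ∑ i, m i * α i k))
      = (∑ k, (u j k : ℝ) * (v k : ℝ)) + m j := by
  classical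
  calc (∑ k, (u j k : ℝ) * ((v k : ℝ) + ∑ i, m i * α i k))
      = ∑ k, ((u j k : ℝ) * (v k : ℝ) + ∑ i, m i * ((u j k : ℝ) * α i k)) := by
        refine Finset.sum_congr rfl fun k _ => ?_
        rw [mul_add, Finset.mul_sum]
        congr 1
        exact Finset.sum_congr rfl fun i _ => by ring
    _ = (∑ k, (u j k : ℝ) * (v k : ℝ)) + ∑ k, ∑ i, m i * ((u j k : ℝ) * α i k) := by
        rw [Finset.sum_add_distrib]
    _ = (∑ k, (u j k : ℝ) * (v k : ℝ)) + ∑ i, m i * ∑ k, (u j k : ℝ) * α i k := by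
        rw [Finset.sum_comm]
        congr 1
        exact Finset.sum_congr rfl fun i _ => by rw [Finset.mul_sum]
    _ = (∑ k, (u j k : ℝ) * (v k : ℝ)) + m j := by
        congr 1
        rw [Finset.sum_congr rfl (fun i (_ : i ∈ Finset.univ) => by rw [hdual j i])]
        simp

lemma char_average {n : ℕ} (u : Fin n → Fin n → ℤ) (T : Finset (Fin n → ℤ))
    (hT : ∀ γ : Fin n → ℤ, ∃! γ₀, γ₀ ∈ T ∧ ∃ c : Fin n → ℤ, ∀ k, γ k = γ₀ k + ∑ i, c i * u i k)
    (p : Fin n → ℝ) (hp : ∀ i, ∃ z : ℤ, (∑ k, (u i k : ℝ) * p k) = z) :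
    (∑ γ ∈ T, Complex.exp (2 * (Real.pi : ℂ) * Complex.I * ((∑ k, (γ k : ℝ) * p k : ℝ) : ℂ)))
      = if (∀ k, ∃ z : ℤ, p k = (z : ℝ)) then (T.card : ℂ) else 0 := by
  classical
  set E : (Fin n → ℤ) → ℂ :=
    fun γ => Complex.exp (2 * (Real.pi : ℂ) * Complex.I * ((∑ k, (γ k : ℝ) * p k : ℝ) : ℂ)) with hE
  -- congruence: equal values on cosets
  have congrE : ∀ δ δ' : Fin n → ℤ, (∃ c : Fin n → ℤ, ∀ k, δ k = δ' k + ∑ i, c i * u i k) →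
      E δ = E δ' := by
    rintro δ δ' ⟨c, hc⟩
    choose z hz using hp
    have key : (∑ k, (δ k : ℝ) * p k)
        = (∑ k, (δ' k : ℝ) * p k) + ((∑ i, c i * z i : ℤ) : ℝ) := by
      have h1 : ∀ k, (δ k : ℝ) = (δ' k : ℝ) + ∑ i, (c i : ℝ) * (u i k : ℝ) := by
        intro k
        have := hc k
        push_cast [this]
        ring
      calc (∑ k, (δ k : ℝ) * p k)
          = ∑ k, ((δ' k : ℝ) * p k + ∑ i, (c i : ℝ) * (u i k : ℝ) * p k) := by
            refine Finset.sum_congr rfl fun k _ => ?_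
            rw [h1 k, add_mul, Finset.sum_mul]
        _ = (∑ k, (δ' k : ℝ) * p k) + ∑ k, ∑ i, (c i : ℝ) * (u i k : ℝ) * p k := by
            rw [Finset.sum_add_distrib]
        _ = (∑ k, (δ' k : ℝ) * p k) + ∑ i, (c i : ℝ) * ∑ k, (u i k : ℝ) * p k := by
            rw [Finset.sum_comm]
            congr 1
            exact Finset.sum_congr rfl fun i _ => by
              rw [Finset.mul_sum]; exact Finset.sum_congr rfl fun k _ => by ring
        _ = (∑ k, (δ' k : ℝ) * p k) + ((∑ i, c i * z i : ℤ) : ℝ) := by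
            push_cast
            congr 1
            exact Finset.sum_congr rfl fun i _ => by rw [hz i]
    simp only [hE]
    rw [key, Complex.ofReal_add, mul_add, Complex.exp_add, Complex.ofReal_intCast,
      exp_two_pi_int, mul_one]
  by_cases hcond : ∀ k, ∃ z : ℤ, p k = (z : ℝ)
  · rw [if_pos hcond]
    choose w hw using hcond
    have hone : ∀ γ ∈ T, E γ = 1 := by
      intro γ _
      have : (∑ k, (γ k : ℝ) * p k) = ((∑ k, γ k * w k : ℤ) : ℝ) := by
        push_cast
        exact Finset.sum_congr rfl fun k _ => by rw [hw k]
      simp only [hE]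
      rw [this, Complex.ofReal_intCast]
      exact exp_two_pi_int _
    rw [Finset.sum_congr rfl hone, Finset.sum_const, nsmul_eq_mul, mul_one]
  · rw [if_neg hcond]
    push_neg at hcond
    obtain ⟨k₀, hk₀⟩ := hcond
    set γ' : Fin n → ℤ := fun k => if k = k₀ then 1 else 0 with hγ'
    have hγ'p : (∑ k, (γ' k : ℝ) * p k) = p k₀ := by
      rw [Finset.sum_eq_single k₀]
      · simp [hγ']
      · intro b _ hb; simp [hγ', hb]
      · intro h; exact absurd (Finset.mem_univ k₀) h
    set e' : ℂ := Complex.exp (2 * (Real.pi : ℂ) * Complex.I * ((p k₀ : ℝ) : ℂ)) with he'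
    have h2 : (2 * (Real.pi : ℂ) * Complex.I) ≠ 0 :=
      mul_ne_zero (mul_ne_zero two_ne_zero (Complex.ofReal_ne_zero.mpr Real.pi_ne_zero))
        Complex.I_ne_zero
    have he'ne : e' ≠ 1 := by
      intro h
      rw [he', Complex.exp_eq_one_iff] at h
      obtain ⟨m, hm⟩ := h
      have hm' : (2 * (Real.pi : ℂ) * Complex.I) * ((p k₀ : ℝ) : ℂ)
          = (2 * (Real.pi : ℂ) * Complex.I) * (m : ℂ) := by rw [hm]; ring
      have : ((p k₀ : ℝ) : ℂ) = (m : ℂ) := mul_left_cancel₀ h2 hm'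
      have : p k₀ = (m : ℝ) := by exact_mod_cast this
      exact hk₀ m this
    set S : ℂ := ∑ γ ∈ T, E γ with hS
    have hrep := fun δ => (hT δ).choose_spec
    set rep : (Fin n → ℤ) → (Fin n → ℤ) := fun δ => (hT δ).choose with hrepdef
    have repmem : ∀ δ, rep δ ∈ T := fun δ => (hrep δ).1.1
    have repc : ∀ δ, ∃ c : Fin n → ℤ, ∀ k, δ k = rep δ k + ∑ i, c i * u i k :=
      fun δ => (hrep δ).1.2
    have repuniq : ∀ δ γ₀, γ₀ ∈ T → (∃ c : Fin n → ℤ, ∀ k, δ k = γ₀ k + ∑ i, c i * u i k) →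
        γ₀ = rep δ := fun δ γ₀ h1 h2 => (hrep δ).2 γ₀ ⟨h1, h2⟩
    have step1 : e' * S = ∑ γ ∈ T, E (fun k => γ k + γ' k) := by
      rw [hS, Finset.mul_sum]
      refine Finset.sum_congr rfl fun γ _ => ?_
      have hsum : (∑ k, (((fun k => γ k + γ' k) k : ℤ) : ℝ) * p k)
          = p k₀ + (∑ k, (γ k : ℝ) * p k) := by
        push_cast
        have : ∀ k ∈ Finset.univ, ((γ k : ℝ) + (γ' k : ℝ)) * p k
            = (γ' k : ℝ) * p k + (γ k : ℝ) * p k := fun k _ => by ring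
        rw [Finset.sum_congr rfl this, Finset.sum_add_distrib, hγ'p]
      simp only [hE]
      rw [hsum, Complex.ofReal_add, mul_add, Complex.exp_add]
    have step2 : (∑ γ ∈ T, E (fun k => γ k + γ' k))
        = ∑ γ ∈ T, E (rep (fun k => γ k + γ' k)) :=
      Finset.sum_congr rfl fun γ _ => congrE _ _ (repc _)
    have step3 : (∑ γ ∈ T, E (rep (fun k => γ k + γ' k))) = S := by
      rw [hS]
      refine Finset.sum_bij' (fun γ _ => rep (fun k => γ k + γ' k))
        (fun γ _ => rep (fun k => γ k - γ' k)) (fun γ _ => repmem _) (fun γ _ => repmem _)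
        ?_ ?_ ?_
      · intro γ hγ
        refine (repuniq _ γ hγ ?_).symm
        obtain ⟨c, hc⟩ := repc (fun k => γ k + γ' k)
        refine ⟨fun i => - c i, fun k => ?_⟩
        have h1 := hc k
        have h3 : (∑ i, -c i * u i k) = -(∑ i, c i * u i k) := by
          rw [← Finset.sum_neg_distrib]; exact Finset.sum_congr rfl fun i _ => by ring
        simp only [h3]; omega
      · intro γ hγ
        refine (repuniq _ γ hγ ?_).symm
        obtain ⟨c, hc⟩ := repc (fun k => γ k - γ' k)
        refine ⟨fun i => - c i, fun k => ?_⟩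
        have h1 := hc k
        have h3 : (∑ i, -c i * u i k) = -(∑ i, c i * u i k) := by
          rw [← Finset.sum_neg_distrib]; exact Finset.sum_congr rfl fun i _ => by ring
        simp only [h3]; omega
      · intro γ _; rfl
    have : e' * S = S := by rw [step1, step2, step3]
    have hfac : (e' - 1) * S = 0 := by rw [sub_mul, one_mul, this, sub_self]
    rcases mul_eq_zero.mp hfac with h | h
    · exact absurd (sub_eq_zero.mp h) he'ne
    · exact h


/-- Averaging over the finite group `Γ = (ℤⁿ)*/Σℤuᵢ` for a simple integral orthant
`C = v + Σⱼ ℝ_{≥0} αⱼ` (with `u₁,…,uₙ` primitive dual-lattice vectors forming a basis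
of `ℝⁿ*`, `α` the dual basis, and `v ∈ ℤⁿ`): for any compactly supported `f`,
`Σ'_{C∩ℤⁿ} f = (1/|Γ|) Σ_{γ∈Γ} Σ'_x e^{2πi⟨γ,x⟩} f(x)`, the inner weighted sum
running over `x = v + m₁α₁ + ⋯ + mₙαₙ`, `mᵢ ∈ ℤ_{≥0}`.  The group `Γ` is encoded by
a complete set `T` of coset representatives of `Σℤuᵢ` in `(ℤⁿ)* = ℤⁿ`. -/
theorem weighted_orthant_sum_eq_character_average
    (n : ℕ) (u : Fin n → Fin n → ℤ)
    (hprim : ∀ i, Finset.univ.gcd (u i) = 1)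
    (hbasis : LinearIndependent ℝ (fun i => fun k => ((u i k : ℝ))))
    (α : Fin n → Fin n → ℝ)
    (hdual : ∀ i j, (∑ k, (u i k : ℝ) * α j k) = if i = j then 1 else 0)
    (v : Fin n → ℤ)
    (T : Finset (Fin n → ℤ))
    (hT : ∀ γ : Fin n → ℤ, ∃! γ₀, γ₀ ∈ T ∧ ∃ c : Fin n → ℤ, ∀ k, γ k = γ₀ k + ∑ i, c i * u i k)
    (f : (Fin n → ℝ) → ℂ) (hf : HasCompactSupport f) :
    (∑' x : Fin n → ℤ,
        (if ∀ j, 0 ≤ ∑ k, (u j k : ℝ) * ((x k : ℝ) - (v k : ℝ))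
          then ((1:ℂ)/2) ^ (Finset.univ.filter
              (fun j : Fin n => (∑ k, (u j k : ℝ) * ((x k : ℝ) - (v k : ℝ))) = 0)).card
          else 0) * f (fun k => (x k : ℝ)))
      = (1 / (T.card : ℂ)) * ∑ γ ∈ T, ∑' m : Fin n → ℕ,
          ((1:ℂ)/2) ^ (Finset.univ.filter (fun j : Fin n => m j = 0)).card *
          Complex.exp (2 * (Real.pi : ℂ) * Complex.I *
            ((∑ k, (γ k : ℝ) * ((v k : ℝ) + ∑ j, (m j : ℝ) * α j k) : ℝ) : ℂ)) *
          f (fun k => (v k : ℝ) + ∑ j, (m j : ℝ) * α j k) := by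
  classical
  -- the lattice point associated to m ∈ ℕⁿ
  set p : (Fin n → ℕ) → (Fin n → ℝ) :=
    fun m k => (v k : ℝ) + ∑ j, (m j : ℝ) * α j k with hpdef
  have hpair : ∀ (m : Fin n → ℕ) (j : Fin n),
      (∑ k, (u j k : ℝ) * p m k) = (∑ k, (u j k : ℝ) * (v k : ℝ)) + (m j : ℝ) := by
    intro m j
    simpa using pairing_eval u α hdual v (fun i => (m i : ℝ)) j
  have hint : ∀ (m : Fin n → ℕ) (j : Fin n), ∃ z : ℤ,
      (∑ k, (u j k : ℝ) * p m k) = (z : ℝ) := by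
    intro m j
    refine ⟨(∑ k, u j k * v k) + (m j : ℤ), ?_⟩
    rw [hpair m j]
    push_cast
    ring
  -- the common middle object
  set H : (Fin n → ℕ) → ℂ := fun m =>
    (if ∀ k, ∃ z : ℤ, p m k = (z : ℝ) then 1 else 0) *
      (((1:ℂ)/2) ^ (Finset.univ.filter (fun j : Fin n => m j = 0)).card * f (p m)) with hHdef
  have hTne : (T.card : ℂ) ≠ 0 := by
    obtain ⟨γ₀, hγ₀, -⟩ := hT 0
    have : T.Nonempty := ⟨γ₀, hγ₀.1⟩
    exact_mod_cast Finset.card_ne_zero_of_mem hγ₀.1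
  -- finiteness of the support in m
  have hfin : {m : Fin n → ℕ | f (p m) ≠ 0}.Finite := by
    obtain ⟨R, hR⟩ := hf.isBounded.subset_closedBall 0
    set N : Fin n → ℕ := fun j =>
      Nat.ceil ((∑ k, |(u j k : ℝ)| * R) + |∑ k, (u j k : ℝ) * (v k : ℝ)|) with hN
    refine Set.Finite.subset (Set.Finite.pi (fun j => Set.finite_Iic (N j))) ?_
    intro m hm
    have hpm : p m ∈ Metric.closedBall (0 : Fin n → ℝ) R :=
      hR (subset_tsupport f hm)
    have hnorm : ‖p m‖ ≤ R := by simpa [mem_closedBall_zero_iff] using hpm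
    intro j _
    have h1 : (m j : ℝ) = (∑ k, (u j k : ℝ) * p m k) - ∑ k, (u j k : ℝ) * (v k : ℝ) := by
      rw [hpair m j]; ring
    have h2 : (m j : ℝ) ≤ (∑ k, |(u j k : ℝ)| * R) + |∑ k, (u j k : ℝ) * (v k : ℝ)| := by
      rw [h1]
      have h3 : (∑ k, (u j k : ℝ) * p m k) ≤ ∑ k, |(u j k : ℝ)| * R := by
        refine Finset.sum_le_sum fun k _ => ?_
        calc (u j k : ℝ) * p m k ≤ |(u j k : ℝ) * p m k| := le_abs_self _
          _ = |(u j k : ℝ)| * |p m k| := abs_mul _ _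
          _ ≤ |(u j k : ℝ)| * R := by
              refine mul_le_mul_of_nonneg_left ?_ (abs_nonneg _)
              calc |p m k| = ‖p m k‖ := rfl
                _ ≤ ‖p m‖ := norm_le_pi_norm (p m) k
                _ ≤ R := hnorm
      have h4 : -(∑ k, (u j k : ℝ) * (v k : ℝ)) ≤ |∑ k, (u j k : ℝ) * (v k : ℝ)| :=
        neg_le_abs _
      linarith
    have : (m j : ℝ) ≤ (N j : ℝ) := le_trans h2 (Nat.le_ceil _)
    exact_mod_cast this
  -- RHS = ∑' H
  have hRHS : (1 / (T.card : ℂ)) * ∑ γ ∈ T, ∑' m : Fin n → ℕ,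
          ((1:ℂ)/2) ^ (Finset.univ.filter (fun j : Fin n => m j = 0)).card *
          Complex.exp (2 * (Real.pi : ℂ) * Complex.I *
            ((∑ k, (γ k : ℝ) * ((v k : ℝ) + ∑ j, (m j : ℝ) * α j k) : ℝ) : ℂ)) *
          f (fun k => (v k : ℝ) + ∑ j, (m j : ℝ) * α j k)
        = ∑' m, H m := by
    set F : (Fin n → ℤ) → (Fin n → ℕ) → ℂ := fun γ m =>
      ((1:ℂ)/2) ^ (Finset.univ.filter (fun j : Fin n => m j = 0)).card *
        Complex.exp (2 * (Real.pi : ℂ) * Complex.I *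
          ((∑ k, (γ k : ℝ) * p m k : ℝ) : ℂ)) * f (p m) with hFdef
    have hsumm : ∀ γ ∈ T, Summable (F γ) := by
      intro γ _
      refine summable_of_ne_finset_zero (s := hfin.toFinset) (fun m hm => ?_)
      have hfz : f (p m) = 0 := by
        by_contra h
        exact hm (hfin.mem_toFinset.mpr h)
      simp [hFdef, hfz]
    have hpoint : ∀ m, (∑ γ ∈ T, F γ m)
        = (if ∀ k, ∃ z : ℤ, p m k = (z : ℝ) then (T.card : ℂ) else 0) *
          (((1:ℂ)/2) ^ (Finset.univ.filter (fun j : Fin n => m j = 0)).card * f (p m)) := by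
      intro m
      have h1 : ∀ γ ∈ T, F γ m
          = Complex.exp (2 * (Real.pi : ℂ) * Complex.I *
              ((∑ k, (γ k : ℝ) * p m k : ℝ) : ℂ)) *
            (((1:ℂ)/2) ^ (Finset.univ.filter (fun j : Fin n => m j = 0)).card * f (p m)) := by
        intro γ _
        simp only [hFdef]
        ring
      rw [Finset.sum_congr rfl h1, ← Finset.sum_mul,
        char_average u T hT (p m) (hint m)]
    show (1 / (T.card : ℂ)) * ∑ γ ∈ T, ∑' m, F γ m = ∑' m, H m
    rw [← Summable.tsum_finsetSum hsumm, tsum_congr hpoint, ← tsum_mul_left]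
    refine tsum_congr fun m => ?_
    by_cases hc : ∀ k, ∃ z : ℤ, p m k = (z : ℝ)
    · simp only [hHdef, if_pos hc, one_mul]
      rw [← mul_assoc, one_div, inv_mul_cancel₀ hTne, one_mul]
    · simp [hHdef, if_neg hc]
  -- LHS = ∑' H
  have hLHS : (∑' x : Fin n → ℤ,
        (if ∀ j, 0 ≤ ∑ k, (u j k : ℝ) * ((x k : ℝ) - (v k : ℝ))
          then ((1:ℂ)/2) ^ (Finset.univ.filter
              (fun j : Fin n => (∑ k, (u j k : ℝ) * ((x k : ℝ) - (v k : ℝ))) = 0)).card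
          else 0) * f (fun k => (x k : ℝ)))
        = ∑' m, H m := by
    have hcondOf : ∀ m : Fin n → ℕ, H m ≠ 0 → ∀ k, ∃ z : ℤ, p m k = (z : ℝ) := by
      intro m hm
      by_contra h
      exact hm (by simp [hHdef, if_neg h])
    have hfloorcast : ∀ (m : Fin n → ℕ), H m ≠ 0 → ∀ k,
        ((⌊p m k⌋ : ℤ) : ℝ) = p m k := by
      intro m hm k
      obtain ⟨z, hz⟩ := hcondOf m hm k
      rw [hz, Int.floor_intCast]
    refine tsum_eq_tsum_of_ne_zero_bij
      (fun mp => fun k => ⌊p mp.1 k⌋) ?_ ?_ ?_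
    · -- injectivity
      rintro ⟨m₁, h₁⟩ ⟨m₂, h₂⟩ h
      have hpp : ∀ k, p m₁ k = p m₂ k := by
        intro k
        rw [← hfloorcast m₁ h₁ k, ← hfloorcast m₂ h₂ k]
        exact_mod_cast congrFun h k
      have : ∀ j, (m₁ j : ℝ) = (m₂ j : ℝ) := by
        intro j
        have e1 := hpair m₁ j
        have e2 := hpair m₂ j
        have e3 : (∑ k, (u j k : ℝ) * p m₁ k) = ∑ k, (u j k : ℝ) * p m₂ k :=
          Finset.sum_congr rfl fun k _ => by rw [hpp k]
        rw [e1, e2] at e3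
        linarith
      exact Subtype.ext (funext fun j => Nat.cast_injective (this j))
    · -- support inclusion
      rintro x hx
      have hcone : ∀ j, 0 ≤ ∑ k, (u j k : ℝ) * ((x k : ℝ) - (v k : ℝ)) := by
        by_contra h
        exact hx (by simp only [if_neg h, zero_mul])
      have hfx : f (fun k => (x k : ℝ)) ≠ 0 := fun h => hx (by simp only [h, mul_zero])
      set m : Fin n → ℕ := fun j => (∑ k, u j k * (x k - v k)).toNat with hmdef
      have hD : ∀ j, ((∑ k, u j k * (x k - v k) : ℤ) : ℝ)
          = ∑ k, (u j k : ℝ) * ((x k : ℝ) - (v k : ℝ)) := by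
        intro j
        push_cast
        rfl
      have hcast : ∀ j, (m j : ℝ) = ∑ k, (u j k : ℝ) * ((x k : ℝ) - (v k : ℝ)) := by
        intro j
        have hnn : 0 ≤ (∑ k, u j k * (x k - v k) : ℤ) := by
          have := hcone j
          rw [← hD j] at this
          exact_mod_cast this
        rw [← hD j, hmdef]
        exact_mod_cast congrArg (Int.cast : ℤ → ℝ) (Int.toNat_of_nonneg hnn)
      have hpmx : ∀ k, p m k = (x k : ℝ) := by
        intro k
        show (v k : ℝ) + ∑ j, (m j : ℝ) * α j k = (x k : ℝ)
        have h5 : ∑ j, (m j : ℝ) * α j k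
            = ∑ j, (∑ k', (u j k' : ℝ) * ((x k' : ℝ) - (v k' : ℝ))) * α j k :=
          Finset.sum_congr rfl fun j _ => by rw [hcast j]
        rw [h5, dual_reconstruct u α hdual (fun k' => (x k' : ℝ) - (v k' : ℝ)) k]
        ring
      have hcond : ∀ k, ∃ z : ℤ, p m k = (z : ℝ) := fun k => ⟨x k, by rw [hpmx k]⟩
      have hHm : H m ≠ 0 := by
        simp only [hHdef, if_pos hcond, one_mul]
        refine mul_ne_zero (pow_ne_zero _ (by norm_num)) ?_
        have : p m = fun k => (x k : ℝ) := funext hpmx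
        rw [this]
        exact hfx
      refine ⟨⟨m, hHm⟩, ?_⟩
      funext k
      show ⌊p m k⌋ = x k
      rw [hpmx k, Int.floor_intCast]
    · -- value match
      rintro ⟨m, hm⟩
      have hx : ∀ k, ((⌊p m k⌋ : ℤ) : ℝ) = p m k := hfloorcast m hm
      have hd : ∀ j, (∑ k, (u j k : ℝ) * (((⌊p m k⌋ : ℤ) : ℝ) - (v k : ℝ))) = (m j : ℝ) := by
        intro j
        have h6 : (∑ k, (u j k : ℝ) * (((⌊p m k⌋ : ℤ) : ℝ) - (v k : ℝ)))
            = (∑ k, (u j k : ℝ) * p m k) - ∑ k, (u j k : ℝ) * (v k : ℝ) := by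
          rw [← Finset.sum_sub_distrib]
          exact Finset.sum_congr rfl fun k _ => by rw [hx k]; ring
        rw [h6, hpair m j]
        ring
      have hargs : (fun k => ((⌊p m k⌋ : ℤ) : ℝ)) = p m := funext hx
      have hcone : ∀ j, 0 ≤ ∑ k, (u j k : ℝ) * (((⌊p m k⌋ : ℤ) : ℝ) - (v k : ℝ)) := by
        intro j
        rw [hd j]
        positivity
      have hfilter : (Finset.univ.filter
            (fun j : Fin n => (∑ k, (u j k : ℝ) * (((⌊p m k⌋ : ℤ) : ℝ) - (v k : ℝ))) = 0))
          = Finset.univ.filter (fun j : Fin n => m j = 0) := by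
        refine Finset.filter_congr fun j _ => ?_
        rw [hd j]
        exact_mod_cast Iff.rfl
      show (if ∀ j, 0 ≤ ∑ k, (u j k : ℝ) * (((⌊p m k⌋ : ℤ) : ℝ) - (v k : ℝ))
          then ((1:ℂ)/2) ^ (Finset.univ.filter
              (fun j : Fin n => (∑ k, (u j k : ℝ) * (((⌊p m k⌋ : ℤ) : ℝ) - (v k : ℝ))) = 0)).card
          else 0) * f (fun k => ((⌊p m k⌋ : ℤ) : ℝ)) = H m
      rw [if_pos hcone, hfilter, hargs]
      simp only [hHdef, if_pos (hcondOf m hm), one_mul]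
  rw [hLHS, hRHS]
end

section
/- Let Δ be a simple integral polytope, F a face, v ∈ F a vertex, and γ ∈ Γ_F ⊆ Γ_v. Define λ_{γ,j,v} = e^{2πi⟨γ,α_{j,v}⟩} for j ∈ I_v, where α_{j,v} is the basis dual to {uᵢ : i ∈ I_v}. Then: (a) for j ∈ I_F, λ_{γ,j,v} is independent of the choice of vertex v ∈ F; (b) for j ∈ I_v ∖ I_F, λ_{γ,j,v} = 1; and (c) if moreover γ ∈ Γ_F^♭ := Γ_F ∖ ∪_{E ⊋ F} Γ_E (union over faces E strictly containing F), then λ_{γ,j,F} ≠ 1 for all j ∈ I_F. -/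
open scoped BigOperators

/-- Properties of the roots of unity `λ_{γ,j,v} = e^{2πi⟨γ,α_{j,v}⟩}` associated to a
face `F` of a simple integral polytope.  Here `v, v'` are vertices of `F` (so
`I_F ⊆ I_v, I_{v'}`, with `|I_v| = |I_{v'}| = n`), `α_{·,v}` is the basis dual to
`{uᵢ : i ∈ I_v}`, and `γ ∈ Γ_F` is represented by an integral vector lying in
`N_F = span_ℝ{uᵢ : i ∈ I_F}`.  Then:
(a) for `j ∈ I_F`, `λ_{γ,j,v}` is independent of the vertex `v ∈ F`;
(b) for `j ∈ I_v ∖ I_F`, `λ_{γ,j,v} = 1`;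
(c) if `γ ∈ Γ_F^♭` (no representative modulo `V_F` lies in `N_E` for a face
`E ⊋ F`, i.e. in `span_ℝ{uᵢ : i ∈ I_F ∖ {j}}` for some `j ∈ I_F`), then
`λ_{γ,j,F} ≠ 1` for all `j ∈ I_F`. -/
theorem lambda_gamma_properties
    (n d : ℕ) (u : Fin d → Fin n → ℤ)
    (IF Iv Iv' : Finset (Fin d)) (h1 : IF ⊆ Iv) (h2 : IF ⊆ Iv')
    (hcard : Iv.card = n) (hcard' : Iv'.card = n)
    (α α' : Fin d → Fin n → ℝ)
    (hα : ∀ i ∈ Iv, ∀ j ∈ Iv, (∑ k, (u i k : ℝ) * α j k) = if i = j then 1 else 0)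
    (hα' : ∀ i ∈ Iv', ∀ j ∈ Iv', (∑ k, (u i k : ℝ) * α' j k) = if i = j then 1 else 0)
    (γ : Fin n → ℤ)
    (hγ : (fun k => ((γ k : ℝ))) ∈
        Submodule.span ℝ ((fun i : Fin d => fun k => ((u i k : ℝ))) '' (IF : Set (Fin d)))) :
    (∀ j ∈ IF,
      Complex.exp (2 * (Real.pi : ℂ) * Complex.I * ((∑ k, (γ k : ℝ) * α j k : ℝ) : ℂ))
        = Complex.exp (2 * (Real.pi : ℂ) * Complex.I * ((∑ k, (γ k : ℝ) * α' j k : ℝ) : ℂ))) ∧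
    (∀ j ∈ Iv, j ∉ IF →
      Complex.exp (2 * (Real.pi : ℂ) * Complex.I * ((∑ k, (γ k : ℝ) * α j k : ℝ) : ℂ)) = 1) ∧
    ((∀ j ∈ IF, ¬ ∃ (γ'' : Fin n → ℤ) (c : Fin d → ℤ),
        ((fun k => ((γ'' k : ℝ))) ∈
          Submodule.span ℝ
            ((fun i : Fin d => fun k => ((u i k : ℝ))) '' ((IF.erase j : Finset (Fin d)) : Set (Fin d)))) ∧
        (∀ k, (γ k : ℝ) = (γ'' k : ℝ) + ∑ i ∈ IF, (c i : ℝ) * (u i k : ℝ))) →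
      ∀ j ∈ IF,
        Complex.exp (2 * (Real.pi : ℂ) * Complex.I * ((∑ k, (γ k : ℝ) * α j k : ℝ) : ℂ)) ≠ 1) := by
  classical
  obtain ⟨l, hl, hlsum⟩ := (Finsupp.mem_span_image_iff_linearCombination ℝ).mp hγ
  -- representation: ∀ k, (γ k : ℝ) = ∑ i ∈ IF, l i * u i k
  have hrep : ∀ k, (γ k : ℝ) = ∑ i ∈ IF, l i * u i k := by
    intro k
    have := congrFun hlsum k
    rw [Finsupp.linearCombination_apply] at this
    rw [← this]
    rw [Finsupp.sum]
    rw [Finset.sum_apply]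
    rw [Finset.sum_subset hl]
    · simp
    · intro i _ hi
      simp [Finsupp.notMem_support_iff.mp hi]
  have key : ∀ (Iw : Finset (Fin d)) (β : Fin d → Fin n → ℝ), IF ⊆ Iw →
      (∀ i ∈ Iw, ∀ j ∈ Iw, (∑ k, (u i k : ℝ) * β j k) = if i = j then 1 else 0) →
      ∀ j ∈ Iw, (∑ k, (γ k : ℝ) * β j k) = if j ∈ IF then l j else 0 := by
    intro Iw β hsub hβ j hj
    calc ∑ k, (γ k : ℝ) * β j k
        = ∑ k, (∑ i ∈ IF, l i * u i k) * β j k := by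
          refine Finset.sum_congr rfl fun k _ => by rw [hrep k]
      _ = ∑ i ∈ IF, l i * ∑ k, (u i k : ℝ) * β j k := by
          simp only [Finset.sum_mul]
          rw [Finset.sum_comm]
          refine Finset.sum_congr rfl fun i _ => ?_
          rw [Finset.mul_sum]
          exact Finset.sum_congr rfl fun k _ => by ring
      _ = ∑ i ∈ IF, l i * (if i = j then 1 else 0) := by
          refine Finset.sum_congr rfl fun i hi => by rw [hβ i (hsub hi) j hj]
      _ = if j ∈ IF then l j else 0 := by
          simp [mul_ite, Finset.sum_ite_eq]
  refine ⟨?_, ?_, ?_⟩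
  · intro j hj
    rw [key Iv α h1 hα j (h1 hj), key Iv' α' h2 hα' j (h2 hj)]
  · intro j hj hjF
    rw [key Iv α h1 hα j hj, if_neg hjF]
    simp
  · intro hno j hj hone
    have hval := key Iv α h1 hα j (h1 hj)
    rw [if_pos hj] at hval
    rw [hval] at hone
    obtain ⟨m, hm⟩ := Complex.exp_eq_one_iff.mp hone
    have h2pi : (2 * (Real.pi : ℂ) * Complex.I) ≠ 0 := by
      simp [Real.pi_ne_zero, Complex.I_ne_zero]
    have hlj : ((l j : ℝ) : ℂ) = (m : ℂ) := by
      have : 2 * (Real.pi : ℂ) * Complex.I * (l j : ℂ) =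
          2 * (Real.pi : ℂ) * Complex.I * (m : ℂ) := by
        rw [hm]; ring
      exact mul_left_cancel₀ h2pi this
    have hljR : l j = (m : ℝ) := by exact_mod_cast hlj
    refine hno j hj ⟨fun k => γ k - m * u j k, fun i => if i = j then m else 0, ?_, ?_⟩
    · have heq : (fun k => ((γ k - m * u j k : ℤ) : ℝ)) =
          ∑ i ∈ IF.erase j, l i • (fun k => ((u i k : ℝ))) := by
        funext k
        rw [Finset.sum_apply]
        have := hrep k
        rw [← Finset.sum_erase_add IF _ hj] at this
        push_cast
        rw [this, hljR]
        simp [mul_comm]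
      rw [heq]
      refine Submodule.sum_mem _ fun i hi => ?_
      exact Submodule.smul_mem _ _ (Submodule.subset_span ⟨i, Finset.mem_coe.mpr hi, rfl⟩)
    · intro k
      simp only [apply_ite (fun z : ℤ => (z : ℝ)), Int.cast_zero, ite_mul, zero_mul,
        Finset.sum_ite_eq', hj, if_true]
      push_cast
      ring
end

section
/- Let Δ be a simple integral polytope with vertices v and associated finite groups Γ_v, Γ_F for faces F, and let Γ_F^♭ = Γ_F ∖ ∪_{E ⊋ F} Γ_E. Then for each vertex v, Γ_v is the disjoint union, over all faces F containing v, of the sets Γ_F^♭ (viewed inside Γ_v via the natural inclusions). -/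
open scoped BigOperators

/-- Partition `Γ_v = ⨆_{F ∋ v} Γ_F^♭` for a vertex `v` of a simple integral polytope.
Since `Δ` is simple, the faces `F` containing `v` correspond to the subsets
`J = I_F ⊆ I_v`; `[γ] ∈ Γ_F ⊆ Γ_v` means that `γ` has a representative modulo
`V_v = Σ_{i∈I_v}ℤuᵢ` lying in `N_F = span_ℝ{uᵢ : i ∈ J}`, and `[γ] ∈ Γ_F^♭` means
additionally `[γ] ∉ Γ_E` for every face `E ⊋ F` (i.e. every `J' ⊊ J`).  Every class
in `Γ_v` lies in `Γ_F^♭` for exactly one face `F ∋ v`. -/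
theorem gamma_v_partition
    (n d : ℕ) (u : Fin d → Fin n → ℤ)
    (Iv : Finset (Fin d)) (hcard : Iv.card = n)
    (hind : LinearIndependent ℝ (fun i : Iv => fun k => ((u i k : ℝ))))
    (γ : Fin n → ℤ) :
    ∃! J : Finset (Fin d), J ⊆ Iv ∧
      (∃ (γ' : Fin n → ℤ) (c : Fin d → ℤ),
        ((fun k => ((γ' k : ℝ))) ∈
          Submodule.span ℝ ((fun i : Fin d => fun k => ((u i k : ℝ))) '' (J : Set (Fin d)))) ∧
        (∀ k, (γ k : ℝ) = (γ' k : ℝ) + ∑ i ∈ Iv, (c i : ℝ) * (u i k : ℝ))) ∧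
      (∀ J' : Finset (Fin d), J' ⊂ J →
        ¬ ∃ (γ' : Fin n → ℤ) (c : Fin d → ℤ),
          ((fun k => ((γ' k : ℝ))) ∈
            Submodule.span ℝ ((fun i : Fin d => fun k => ((u i k : ℝ))) '' (J' : Set (Fin d)))) ∧
          (∀ k, (γ k : ℝ) = (γ' k : ℝ) + ∑ i ∈ Iv, (c i : ℝ) * (u i k : ℝ))) := by
  classical
  set uR : Fin d → Fin n → ℝ := fun i k => ((u i k : ℝ)) with huR
  have hcard' : Fintype.card Iv = Module.finrank ℝ (Fin n → ℝ) := by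
    simp [Fintype.card_coe, hcard, Module.finrank_fintype_fun_eq_card]
  let b : Module.Basis Iv ℝ (Fin n → ℝ) :=
    Module.Basis.mk hind ((hind.span_eq_top_of_card_eq_finrank' hcard').ge)
  have hb : ∀ i : Iv, b i = uR (↑i) := fun i => by
    simp [b, Module.Basis.mk_apply, uR]
  set a : Iv →₀ ℝ := b.repr (fun k => ((γ k : ℝ))) with ha
  -- helper: repr of an integer combination over Iv
  have hrepr : ∀ (c : Fin d → ℤ) (j : Iv),
      b.repr (∑ i ∈ Iv.attach, (c ↑i : ℝ) • uR ↑i) j = c ↑j := by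
    intro c j
    rw [map_sum]
    have : ∀ i ∈ Iv.attach, b.repr ((c ↑i : ℝ) • uR ↑i) = Finsupp.single i (c ↑i : ℝ) := by
      intro i _
      rw [← hb i, map_smul, b.repr_self]
      simp [Finsupp.smul_single]
    rw [Finset.sum_congr rfl this]
    rw [Finsupp.finset_sum_apply]
    rw [Finset.sum_eq_single j]
    · simp
    · intro i _ hij; simp [Finsupp.single_apply, hij]
    · intro h; exact absurd (Finset.mem_attach _ _) h
  -- rewrite pointwise equation as a vector equation
  have hvec : ∀ (γ' : Fin n → ℤ) (c : Fin d → ℤ),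
      ((∀ k, (γ k : ℝ) = (γ' k : ℝ) + ∑ i ∈ Iv, (c i : ℝ) * (u i k : ℝ)) ↔
        (fun k => ((γ k : ℝ))) = (fun k => ((γ' k : ℝ)))
          + ∑ i ∈ Iv.attach, (c ↑i : ℝ) • uR ↑i) := by
    intro γ' c
    rw [funext_iff]
    refine forall_congr' fun k => ?_
    rw [Finset.sum_attach Iv (fun i => (c i : ℝ) • uR i)]
    simp [Finset.sum_apply, uR]
  -- characterization of the property P J
  have key : ∀ J : Finset (Fin d), J ⊆ Iv →
      ((∃ (γ' : Fin n → ℤ) (c : Fin d → ℤ),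
        ((fun k => ((γ' k : ℝ))) ∈
          Submodule.span ℝ (uR '' (J : Set (Fin d)))) ∧
        (∀ k, (γ k : ℝ) = (γ' k : ℝ) + ∑ i ∈ Iv, (c i : ℝ) * (u i k : ℝ))) ↔
      (∀ j : Iv, (↑j : Fin d) ∉ J → ∃ m : ℤ, a j = m)) := by
    intro J hJ
    constructor
    · rintro ⟨γ', c, hspan, heq⟩ j hj
      rw [hvec] at heq
      have h1 : a j = b.repr (fun k => ((γ' k : ℝ))) j + c ↑j := by
        rw [ha, heq, map_add, Finsupp.add_apply, hrepr]
      have h2 : b.repr (fun k => ((γ' k : ℝ))) j = 0 := by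
        have hsub : (fun k => ((γ' k : ℝ))) ∈
            Submodule.span ℝ (b '' {i : Iv | (↑i : Fin d) ∈ J}) := by
          refine Submodule.span_mono ?_ hspan
          rintro x ⟨i, hi, rfl⟩
          exact ⟨⟨i, hJ hi⟩, hi, hb ⟨i, hJ hi⟩⟩
        rw [Module.Basis.mem_span_image] at hsub
        by_contra h0
        exact hj (hsub (Finsupp.mem_support_iff.mpr h0))
      exact ⟨c ↑j, by rw [h1, h2, zero_add]⟩
    · intro h
      set c : Fin d → ℤ := fun i =>
        if hi : i ∈ Iv then (if hj : (i : Fin d) ∉ J then Classical.choose (h ⟨i, hi⟩ hj) else 0)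
        else 0 with hc
      refine ⟨fun k => γ k - ∑ i ∈ Iv, c i * u i k, c, ?_, ?_⟩
      · have hmem : (fun k => (((γ k - ∑ i ∈ Iv, c i * u i k : ℤ) : ℝ))) ∈
            Submodule.span ℝ (b '' {i : Iv | (↑i : Fin d) ∈ J}) := by
          rw [Module.Basis.mem_span_image]
          intro j hjs
          rw [Finset.mem_coe, Finsupp.mem_support_iff] at hjs
          by_contra hj
          apply hjs
          have hγ' : (fun k => (((γ k - ∑ i ∈ Iv, c i * u i k : ℤ) : ℝ))) =
              (fun k => ((γ k : ℝ))) - ∑ i ∈ Iv.attach, (c ↑i : ℝ) • uR ↑i := by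
            funext k
            rw [Finset.sum_attach Iv (fun i => (c i : ℝ) • uR i)]
            push_cast
            simp [Finset.sum_apply, uR]
          rw [hγ', map_sub, Finsupp.sub_apply, hrepr, ← ha]
          have hcj : c ↑j = Classical.choose (h j hj) := by
            show (if hi : (↑j : Fin d) ∈ Iv then (if hj : (↑j : Fin d) ∉ J then Classical.choose (h ⟨↑j, hi⟩ hj) else 0) else 0) = _
            have hj' : (↑j : Fin d) ∉ J := hj
            rw [dif_pos j.2, dif_pos hj']
          rw [hcj, ← Classical.choose_spec (h j hj), sub_self]
        refine Submodule.span_mono ?_ hmem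
        rintro x ⟨i, hi, rfl⟩
        exact ⟨↑i, hi, (hb i).symm⟩
      · intro k
        push_cast
        ring
  -- the canonical minimal J
  set J0 : Finset (Fin d) :=
    Iv.filter (fun i => ∀ hi : i ∈ Iv, ¬ ∃ m : ℤ, a ⟨i, hi⟩ = m) with hJ0
  have hJ0sub : J0 ⊆ Iv := Finset.filter_subset _ _
  have hmemJ0 : ∀ j : Iv, (↑j : Fin d) ∈ J0 ↔ ¬ ∃ m : ℤ, a j = m := by
    intro j
    rw [hJ0, Finset.mem_filter]
    constructor
    · rintro ⟨-, hj⟩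
      exact hj j.2
    · intro hj
      exact ⟨j.2, fun hi => by rwa [Subtype.coe_eta]⟩
  -- J0 ⊆ J ↔ property, for J ⊆ Iv
  have hchar : ∀ J : Finset (Fin d), J ⊆ Iv →
      ((∀ j : Iv, (↑j : Fin d) ∉ J → ∃ m : ℤ, a j = m) ↔ J0 ⊆ J) := by
    intro J hJ
    constructor
    · intro h i hi
      have hi' := (hmemJ0 ⟨i, hJ0sub hi⟩).mp hi
      by_contra hiJ
      exact hi' (h ⟨i, hJ0sub hi⟩ hiJ)
    · intro h j hj
      by_contra hm
      exact hj (h ((hmemJ0 j).mpr hm))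
  refine ⟨J0, ⟨hJ0sub, ?_, ?_⟩, ?_⟩
  · exact (key J0 hJ0sub).mpr ((hchar J0 hJ0sub).mpr subset_rfl)
  · intro J' hJ' hP
    have hJ'sub : J' ⊆ Iv := hJ'.subset.trans hJ0sub
    have h2 := (hchar J' hJ'sub).mp ((key J' hJ'sub).mp hP)
    exact (Finset.ssubset_iff_subset_ne.mp hJ').2 (Finset.Subset.antisymm hJ'.subset h2)
  · rintro J ⟨hJsub, hP, hmin⟩
    have h1 : J0 ⊆ J := (hchar J hJsub).mp ((key J hJsub).mp hP)
    by_contra hne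
    exact hmin J0 (h1.ssubset_of_ne (fun h => hne h.symm))
      ((key J0 hJ0sub).mpr ((hchar J0 hJ0sub).mpr subset_rfl))
end
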